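/- arXiv:2308.16340 — 5 statements merged into one kernel-verified Lean document; each statement's English description precedes it below -/
import Mathlib

section
/- For two distinct points v₁, v₂ in the plane, pdist(v₁, v₂) = 2·|v₁ - v₂|, where pdist is defined as half the integral over θ ∈ [0, 2π] of the distance between the lines through v₁ and v₂ in direction u_θ. -/
open MeasureTheory Real Set

noncomputable section

abbrev E2 := EuclideanSpace ℝ (Fin 2)

def uvec (θ : ℝ) : E2 := WithLp.toLp 2 ![Real.cos θ, Real.sin θ]

/-- `uvec θ` rotated by π/2 clockwise; the distance between the parallel lines through
`p` and `q` in direction `uvec θ` equals `|⟪p - q, rotvec θ⟫|`. -/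
def rotvec (θ : ℝ) : E2 := WithLp.toLp 2 ![Real.sin θ, -Real.cos θ]

/-- `pdist` between two points: half the integral over `θ ∈ [0, 2π]` of the distance
between the lines through the points in direction `uvec θ`. -/
def pdistPts (v₁ v₂ : E2) : ℝ :=
  (1/2) * ∫ θ in (0:ℝ)..(2*π), |(inner ℝ (v₁ - v₂) (rotvec θ) : ℝ)|

lemma integral_abs_sin : ∫ θ in (0:ℝ)..(2*π), |Real.sin θ| = 4 := by
  have h1 : ∫ θ in (0:ℝ)..π, |Real.sin θ| = 2 := by
    rw [intervalIntegral.integral_congr (g := Real.sin)]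
    · simp [integral_sin]; norm_num
    · intro x hx
      rw [Set.uIcc_of_le pi_nonneg] at hx
      exact abs_of_nonneg (Real.sin_nonneg_of_nonneg_of_le_pi hx.1 hx.2)
  have h2 : ∫ θ in (π:ℝ)..(2*π), |Real.sin θ| = 2 := by
    rw [intervalIntegral.integral_congr (g := fun x => -Real.sin x)]
    · simp [integral_sin]; norm_num
    · intro x hx
      rw [Set.uIcc_of_le (by linarith [pi_nonneg])] at hx
      show |Real.sin x| = -Real.sin x
      rw [abs_of_nonpos]
      have := Real.sin_nonneg_of_nonneg_of_le_pi (x := x - π) (by linarith [hx.1])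
        (by linarith [hx.2])
      rw [Real.sin_sub_pi] at this
      linarith
  rw [← intervalIntegral.integral_add_adjacent_intervals (b := π), h1, h2]
  · norm_num
  all_goals exact (continuous_abs.comp Real.continuous_sin).intervalIntegrable _ _

lemma integral_abs_sin_shift (c : ℝ) : ∫ θ in (0:ℝ)..(2*π), |Real.sin (θ - c)| = 4 := by
  have hper : Function.Periodic (fun x => |Real.sin x|) (2*π) := fun x => by
    simp [Real.sin_periodic x]
  have := intervalIntegral.integral_comp_sub_right (a := (0:ℝ)) (b := 2*π)
    (fun x => |Real.sin x|) c
  rw [this]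
  have := hper.intervalIntegral_add_eq (t := 0 - c) (s := 0)
  simp only [zero_add] at this
  rw [show (2*π - c) = 0 - c + 2*π by ring, this]
  exact integral_abs_sin

theorem pdist_of_points (v₁ v₂ : E2) (h : v₁ ≠ v₂) :
    pdistPts v₁ v₂ = 2 * dist v₁ v₂ := by
  set w : E2 := v₁ - v₂ with hw
  have hw0 : w ≠ 0 := sub_ne_zero.mpr h
  set a : ℝ := w 0
  set b : ℝ := w 1
  set z : ℂ := ⟨a, b⟩ with hz
  have hzne : z ≠ 0 := by
    intro hz0
    apply hw0
    have ha : a = 0 := congrArg Complex.re hz0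
    have hb : b = 0 := congrArg Complex.im hz0
    ext i
    fin_cases i <;> simpa [a, b] using (by assumption : _)
  set r : ℝ := ‖z‖ with hr
  have hrpos : 0 < r := norm_pos_iff.mpr hzne
  have hrsq : r = Real.sqrt (a^2 + b^2) := by
    rw [hr, Complex.norm_def, Complex.normSq_apply]
    ring_nf
    rfl
  set φ : ℝ := Complex.arg z with hφ
  have hcos : Real.cos φ = a / r := Complex.cos_arg hzne
  have hsin : Real.sin φ = b / r := Complex.sin_arg z
  have key : ∀ θ : ℝ, (inner ℝ w (rotvec θ) : ℝ) = r * Real.sin (θ - φ) := by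
    intro θ
    have : (inner ℝ w (rotvec θ) : ℝ) = a * Real.sin θ + b * (-Real.cos θ) := by
      simp [PiLp.inner_apply, Fin.sum_univ_two, rotvec, a, b, mul_comm]
    rw [this, Real.sin_sub, hcos, hsin]
    field_simp
    ring
  have hint : ∫ θ in (0:ℝ)..(2*π), |(inner ℝ w (rotvec θ) : ℝ)| = 4 * r := by
    have : ∀ θ : ℝ, |(inner ℝ w (rotvec θ) : ℝ)| = r * |Real.sin (θ - φ)| := by
      intro θ
      rw [key θ, abs_mul, abs_of_pos hrpos]
    simp only [this]
    rw [intervalIntegral.integral_const_mul, integral_abs_sin_shift]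
    ring
  have hdist : dist v₁ v₂ = r := by
    rw [dist_eq_norm, ← hw, hrsq, EuclideanSpace.norm_eq]
    congr 1
    simp [Fin.sum_univ_two, Real.norm_eq_abs, sq_abs, a, b]
  rw [pdistPts, hint, hdist]
  ring

end
end

section
/- pdist is convex under Minkowski combination: for convex bodies C₁, C₂, D and t ∈ [0,1], pdist(tC₁ + (1−t)C₂, D) ≤ t·pdist(C₁, D) + (1−t)·pdist(C₂, D). -/
open MeasureTheory Real Set Pointwise

noncomputable section

def IsConvexBody (C : Set E2) : Prop :=
  IsCompact C ∧ Convex ℝ C ∧ (interior C).Nonempty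

/-- `n θ` is the touching point of the supporting line of `C` with inward normal `uvec θ`. -/
def IsNormalSel (C : Set E2) (n : ℝ → E2) : Prop :=
  ∀ θ, n θ ∈ C ∧ ∀ y ∈ C, (inner ℝ (n θ) (uvec θ) : ℝ) ≤ inner ℝ y (uvec θ)

/-- pseudodistance computed from normal selections of the two bodies. -/
def pdistN (n₁ n₂ : ℝ → E2) : ℝ :=
  (1/2) * ∫ θ in (0:ℝ)..(2*π), |(inner ℝ (n₁ θ - n₂ θ) (rotvec θ) : ℝ)|

/-- distance from a point to the normal line of a body with normal selection `n`. -/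
def pdistP (v : E2) (n : ℝ → E2) : ℝ :=
  (1/2) * ∫ θ in (0:ℝ)..(2*π), |(inner ℝ (v - n θ) (rotvec θ) : ℝ)|

def hsup (C : Set E2) (θ : ℝ) : ℝ := sSup ((fun x => (inner ℝ x (rotvec θ) : ℝ)) '' C)
def hinf (C : Set E2) (θ : ℝ) : ℝ := sInf ((fun x => (inner ℝ x (rotvec θ) : ℝ)) '' C)

def pperN (C : Set E2) (n : ℝ → E2) : ℝ :=
  (1/2) * ∫ θ in (0:ℝ)..(2*π),
    (|hsup C θ - (inner ℝ (n θ) (rotvec θ) : ℝ)| + |hinf C θ - (inner ℝ (n θ) (rotvec θ) : ℝ)|)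

def ConstantWidth (D : Set E2) (w : ℝ) : Prop :=
  ∀ d : E2, ‖d‖ = 1 →
    sSup ((fun x => (inner ℝ x d : ℝ)) '' D) - sInf ((fun x => (inner ℝ x d : ℝ)) '' D) = w

end

noncomputable section

/-! ### Auxiliary lemmas -/

lemma inner_uvec_eq (x : E2) (θ : ℝ) :
    (inner ℝ x (uvec θ) : ℝ) = x 0 * Real.cos θ + x 1 * Real.sin θ := by
  simp [uvec, PiLp.inner_apply, Fin.sum_univ_two, RCLike.inner_apply]
  ring

lemma inner_rotvec_eq (x : E2) (θ : ℝ) :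
    (inner ℝ x (rotvec θ) : ℝ) = x 0 * Real.sin θ - x 1 * Real.cos θ := by
  simp [rotvec, PiLp.inner_apply, Fin.sum_univ_two, RCLike.inner_apply]
  ring

lemma hasDerivAt_inner_uvec (x : E2) (θ : ℝ) :
    HasDerivAt (fun s => (inner ℝ x (uvec s) : ℝ)) (-(inner ℝ x (rotvec θ) : ℝ)) θ := by
  have h := ((Real.hasDerivAt_cos θ).const_mul (x 0)).add ((Real.hasDerivAt_sin θ).const_mul (x 1))
  have he : (fun s => (inner ℝ x (uvec s) : ℝ)) = fun s => x 0 * Real.cos s + x 1 * Real.sin s := by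
    funext s; exact inner_uvec_eq x s
  rw [he, inner_rotvec_eq]
  refine h.congr_deriv ?_
  ring

lemma norm_rotvec (θ : ℝ) : ‖rotvec θ‖ = 1 := by
  have : ‖rotvec θ‖ = Real.sqrt (Real.sin θ ^ 2 + Real.cos θ ^ 2) := by
    simp [EuclideanSpace.norm_eq, Fin.sum_univ_two, Real.norm_eq_abs, sq_abs, rotvec]
  rw [this, Real.sin_sq_add_cos_sq, Real.sqrt_one]

lemma abs_inner_rotvec_le (x : E2) (θ : ℝ) : |(inner ℝ x (rotvec θ) : ℝ)| ≤ ‖x‖ := by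
  have h := abs_real_inner_le_norm x (rotvec θ)
  rwa [norm_rotvec, mul_one] at h

lemma norm_uvec_sub_le (a b : ℝ) : ‖uvec a - uvec b‖ ≤ 2 * |a - b| := by
  have h0 : ‖uvec a - uvec b‖ ≤ |Real.cos a - Real.cos b| + |Real.sin a - Real.sin b| := by
    have hn : ‖uvec a - uvec b‖ =
        Real.sqrt ((Real.cos a - Real.cos b)^2 + (Real.sin a - Real.sin b)^2) := by
      simp [EuclideanSpace.norm_eq, Fin.sum_univ_two, Real.norm_eq_abs, sq_abs, uvec]
    rw [hn]
    have h2 : (Real.cos a - Real.cos b)^2 + (Real.sin a - Real.sin b)^2 ≤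
        (|Real.cos a - Real.cos b| + |Real.sin a - Real.sin b|)^2 := by
      have e1 : (Real.cos a - Real.cos b)^2 = |Real.cos a - Real.cos b|^2 := (sq_abs _).symm
      have e2 : (Real.sin a - Real.sin b)^2 = |Real.sin a - Real.sin b|^2 := (sq_abs _).symm
      nlinarith [mul_nonneg (abs_nonneg (Real.cos a - Real.cos b))
        (abs_nonneg (Real.sin a - Real.sin b))]
    calc Real.sqrt ((Real.cos a - Real.cos b)^2 + (Real.sin a - Real.sin b)^2)
        ≤ Real.sqrt ((|Real.cos a - Real.cos b| + |Real.sin a - Real.sin b|)^2) :=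
          Real.sqrt_le_sqrt h2
      _ = |Real.cos a - Real.cos b| + |Real.sin a - Real.sin b| := by
          rw [Real.sqrt_sq (by positivity)]
  have lipc : LipschitzWith 1 Real.cos := by
    apply lipschitzWith_of_nnnorm_deriv_le Real.differentiable_cos
    intro x
    rw [Real.deriv_cos]
    simp only [← NNReal.coe_le_coe, coe_nnnorm, Real.norm_eq_abs, NNReal.coe_one, abs_neg]
    exact Real.abs_sin_le_one x
  have lips : LipschitzWith 1 Real.sin := by
    apply lipschitzWith_of_nnnorm_deriv_le Real.differentiable_sin
    intro x
    rw [Real.deriv_sin]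
    simp only [← NNReal.coe_le_coe, coe_nnnorm, Real.norm_eq_abs, NNReal.coe_one]
    exact Real.abs_cos_le_one x
  have hc := lipc.dist_le_mul a b
  have hs := lips.dist_le_mul a b
  rw [Real.dist_eq, Real.dist_eq, NNReal.coe_one, one_mul] at hc hs
  linarith

/-- The "minimal support value" function associated to a normal selection. -/
def gsel (n : ℝ → E2) (θ : ℝ) : ℝ := (inner ℝ (n θ) (uvec θ) : ℝ)

lemma gsel_lipschitz {C : Set E2} {n : ℝ → E2} (hn : IsNormalSel C n) {R : ℝ}
    (hR0 : 0 ≤ R) (hR : ∀ x ∈ C, ‖x‖ ≤ R) :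
    LipschitzWith (2 * R).toNNReal (gsel n) := by
  have key : ∀ a b : ℝ, gsel n a - gsel n b ≤ 2 * R * |a - b| := by
    intro a b
    have h1 : gsel n a ≤ (inner ℝ (n b) (uvec a) : ℝ) := (hn a).2 _ (hn b).1
    have h2 : gsel n a - gsel n b ≤ (inner ℝ (n b) (uvec a - uvec b) : ℝ) := by
      rw [inner_sub_right]
      have : gsel n b = (inner ℝ (n b) (uvec b) : ℝ) := rfl
      linarith
    have h3 : (inner ℝ (n b) (uvec a - uvec b) : ℝ) ≤ ‖n b‖ * ‖uvec a - uvec b‖ :=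
      real_inner_le_norm _ _
    have h4 : ‖n b‖ * ‖uvec a - uvec b‖ ≤ R * (2 * |a - b|) :=
      mul_le_mul (hR _ (hn b).1) (norm_uvec_sub_le a b) (norm_nonneg _)
        hR0
    calc gsel n a - gsel n b ≤ ‖n b‖ * ‖uvec a - uvec b‖ := le_trans h2 h3
      _ ≤ R * (2 * |a - b|) := h4
      _ = 2 * R * |a - b| := by ring
  apply LipschitzWith.of_dist_le_mul
  intro a b
  rw [Real.dist_eq, Real.dist_eq, Real.coe_toNNReal _ (by positivity)]
  rw [abs_sub_le_iff]
  constructor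
  · exact key a b
  · have := key b a
    rwa [abs_sub_comm] at this

lemma gsel_envelope {C : Set E2} {n : ℝ → E2} (hn : IsNormalSel C n) {θ : ℝ}
    (hd : DifferentiableAt ℝ (gsel n) θ) :
    (inner ℝ (n θ) (rotvec θ) : ℝ) = -deriv (gsel n) θ := by
  set ψ := fun s => (inner ℝ (n θ) (uvec s) : ℝ) - gsel n s with hψ
  have hmin : ∀ s, ψ θ ≤ ψ s := by
    intro s
    have h1 : gsel n s ≤ (inner ℝ (n θ) (uvec s) : ℝ) := (hn s).2 _ (hn θ).1
    have h2 : ψ θ = 0 := by simp [hψ, gsel]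
    rw [h2]
    simp only [hψ]
    linarith
  have hloc : IsLocalMin ψ θ := Filter.Eventually.of_forall hmin
  have hder : HasDerivAt ψ (-(inner ℝ (n θ) (rotvec θ) : ℝ) - deriv (gsel n) θ) θ :=
    (hasDerivAt_inner_uvec (n θ) θ).sub hd.hasDerivAt
  have := hloc.hasDerivAt_eq_zero hder
  linarith [this]

theorem pdist_convex_minkowski (C₁ C₂ D : Set E2)
    (h₁ : IsConvexBody C₁) (h₂ : IsConvexBody C₂) (hD : IsConvexBody D)
    (t : ℝ) (ht₀ : 0 ≤ t) (ht₁ : t ≤ 1)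
    (n₁ n₂ nD n : ℝ → E2)
    (hn₁ : IsNormalSel C₁ n₁) (hn₂ : IsNormalSel C₂ n₂) (hnD : IsNormalSel D nD)
    (hn : IsNormalSel (t • C₁ + (1 - t) • C₂) n) :
    pdistN n nD ≤ t * pdistN n₁ nD + (1 - t) * pdistN n₂ nD := by
  -- bounds on the bodies
  obtain ⟨R₁', hR₁'⟩ := h₁.1.isBounded.exists_norm_le
  obtain ⟨R₂', hR₂'⟩ := h₂.1.isBounded.exists_norm_le
  obtain ⟨RD', hRD'⟩ := hD.1.isBounded.exists_norm_le
  set R₁ := max R₁' 0 with hR₁def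
  set R₂ := max R₂' 0 with hR₂def
  set RD := max RD' 0 with hRDdef
  have hR₁0 : 0 ≤ R₁ := le_max_right _ _
  have hR₂0 : 0 ≤ R₂ := le_max_right _ _
  have hRD0 : 0 ≤ RD := le_max_right _ _
  have hR₁ : ∀ x ∈ C₁, ‖x‖ ≤ R₁ := fun x hx => le_trans (hR₁' x hx) (le_max_left _ _)
  have hR₂ : ∀ x ∈ C₂, ‖x‖ ≤ R₂ := fun x hx => le_trans (hR₂' x hx) (le_max_left _ _)
  have hRD : ∀ x ∈ D, ‖x‖ ≤ RD := fun x hx => le_trans (hRD' x hx) (le_max_left _ _)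
  -- Lipschitz and a.e. differentiability
  have lip₁ := gsel_lipschitz hn₁ hR₁0 hR₁
  have lip₂ := gsel_lipschitz hn₂ hR₂0 hR₂
  have lipD := gsel_lipschitz hnD hRD0 hRD
  have ae₁ : ∀ᵐ θ, DifferentiableAt ℝ (gsel n₁) θ := lip₁.ae_differentiableAt
  have ae₂ : ∀ᵐ θ, DifferentiableAt ℝ (gsel n₂) θ := lip₂.ae_differentiableAt
  have aeD : ∀ᵐ θ, DifferentiableAt ℝ (gsel nD) θ := lipD.ae_differentiableAt
  -- the support function of the Minkowski combination
  have hg : ∀ θ, gsel n θ = t * gsel n₁ θ + (1 - t) * gsel n₂ θ := by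
    intro θ
    have hmem : t • n₁ θ + (1 - t) • n₂ θ ∈ t • C₁ + (1 - t) • C₂ :=
      Set.add_mem_add (Set.smul_mem_smul_set (hn₁ θ).1) (Set.smul_mem_smul_set (hn₂ θ).1)
    have hle : gsel n θ ≤ (inner ℝ (t • n₁ θ + (1 - t) • n₂ θ) (uvec θ) : ℝ) :=
      (hn θ).2 _ hmem
    rw [inner_add_left, real_inner_smul_left, real_inner_smul_left] at hle
    -- reverse inequality
    obtain ⟨a, ha, b, hb, hab⟩ := Set.mem_add.1 (hn θ).1
    obtain ⟨x, hx, hxa⟩ := Set.mem_smul_set.1 ha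
    obtain ⟨y, hy, hyb⟩ := Set.mem_smul_set.1 hb
    have hnθ : n θ = t • x + (1 - t) • y := by rw [← hxa, ← hyb] at hab; exact hab.symm
    have hge : t * gsel n₁ θ + (1 - t) * gsel n₂ θ ≤ gsel n θ := by
      have e : gsel n θ = t * (inner ℝ x (uvec θ) : ℝ) + (1 - t) * (inner ℝ y (uvec θ) : ℝ) := by
        rw [gsel, hnθ, inner_add_left, real_inner_smul_left, real_inner_smul_left]
      rw [e]
      have h1 : gsel n₁ θ ≤ (inner ℝ x (uvec θ) : ℝ) := (hn₁ θ).2 _ hx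
      have h2 : gsel n₂ θ ≤ (inner ℝ y (uvec θ) : ℝ) := (hn₂ θ).2 _ hy
      have := mul_le_mul_of_nonneg_left h1 ht₀
      have := mul_le_mul_of_nonneg_left h2 (by linarith : (0:ℝ) ≤ 1 - t)
      linarith
    exact le_antisymm hle hge
  -- measurable derivative functions
  set φ₁ := deriv (gsel n₁) with hφ₁def
  set φ₂ := deriv (gsel n₂) with hφ₂def
  set φD := deriv (gsel nD) with hφDdef
  have m₁ : Measurable φ₁ := measurable_deriv _
  have m₂ : Measurable φ₂ := measurable_deriv _
  have mD : Measurable φD := measurable_deriv _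
  -- a.e. identifications
  have E₁ : ∀ᵐ θ, (inner ℝ (n₁ θ) (rotvec θ) : ℝ) = -φ₁ θ := by
    filter_upwards [ae₁] with θ hθ using gsel_envelope hn₁ hθ
  have E₂ : ∀ᵐ θ, (inner ℝ (n₂ θ) (rotvec θ) : ℝ) = -φ₂ θ := by
    filter_upwards [ae₂] with θ hθ using gsel_envelope hn₂ hθ
  have ED : ∀ᵐ θ, (inner ℝ (nD θ) (rotvec θ) : ℝ) = -φD θ := by
    filter_upwards [aeD] with θ hθ using gsel_envelope hnD hθ
  have En : ∀ᵐ θ, (inner ℝ (n θ) (rotvec θ) : ℝ) = -(t * φ₁ θ + (1 - t) * φ₂ θ) := by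
    filter_upwards [ae₁, ae₂] with θ hθ₁ hθ₂
    have hdn : HasDerivAt (gsel n) (t * φ₁ θ + (1 - t) * φ₂ θ) θ := by
      have h := (hθ₁.hasDerivAt.const_mul t).add (hθ₂.hasDerivAt.const_mul (1 - t))
      have he : gsel n = fun s => t * gsel n₁ s + (1 - t) * gsel n₂ s := funext hg
      rw [he]
      exact h
    have := gsel_envelope hn hdn.differentiableAt
    rw [this, hdn.deriv]
  -- the auxiliary measurable integrands
  set ψ₁ := fun θ => φD θ - φ₁ θ with hψ₁def
  set ψ₂ := fun θ => φD θ - φ₂ θ with hψ₂def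
  have mψ₁ : Measurable ψ₁ := mD.sub m₁
  have mψ₂ : Measurable ψ₂ := mD.sub m₂
  -- a.e. bounds
  have B₁ : ∀ᵐ θ, |ψ₁ θ| ≤ R₁ + RD := by
    filter_upwards [E₁, ED] with θ h1 hDq
    have b1 : |(inner ℝ (n₁ θ) (rotvec θ) : ℝ)| ≤ R₁ :=
      le_trans (abs_inner_rotvec_le _ _) (hR₁ _ (hn₁ θ).1)
    have bD : |(inner ℝ (nD θ) (rotvec θ) : ℝ)| ≤ RD :=
      le_trans (abs_inner_rotvec_le _ _) (hRD _ (hnD θ).1)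
    have : ψ₁ θ = (inner ℝ (n₁ θ) (rotvec θ) : ℝ) - (inner ℝ (nD θ) (rotvec θ) : ℝ) := by
      simp only [hψ₁def, h1, hDq]; ring
    rw [this]
    calc |(inner ℝ (n₁ θ) (rotvec θ) : ℝ) - (inner ℝ (nD θ) (rotvec θ) : ℝ)|
        ≤ |(inner ℝ (n₁ θ) (rotvec θ) : ℝ)| + |(inner ℝ (nD θ) (rotvec θ) : ℝ)| := abs_sub _ _
      _ ≤ R₁ + RD := add_le_add b1 bD
  have B₂ : ∀ᵐ θ, |ψ₂ θ| ≤ R₂ + RD := by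
    filter_upwards [E₂, ED] with θ h2 hDq
    have b2 : |(inner ℝ (n₂ θ) (rotvec θ) : ℝ)| ≤ R₂ :=
      le_trans (abs_inner_rotvec_le _ _) (hR₂ _ (hn₂ θ).1)
    have bD : |(inner ℝ (nD θ) (rotvec θ) : ℝ)| ≤ RD :=
      le_trans (abs_inner_rotvec_le _ _) (hRD _ (hnD θ).1)
    have : ψ₂ θ = (inner ℝ (n₂ θ) (rotvec θ) : ℝ) - (inner ℝ (nD θ) (rotvec θ) : ℝ) := by
      simp only [hψ₂def, h2, hDq]; ring
    rw [this]
    calc |(inner ℝ (n₂ θ) (rotvec θ) : ℝ) - (inner ℝ (nD θ) (rotvec θ) : ℝ)|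
        ≤ |(inner ℝ (n₂ θ) (rotvec θ) : ℝ)| + |(inner ℝ (nD θ) (rotvec θ) : ℝ)| := abs_sub _ _
      _ ≤ R₂ + RD := add_le_add b2 bD
  -- a.e. equality of the integrands
  have A₁ : (fun θ => |(inner ℝ (n₁ θ - nD θ) (rotvec θ) : ℝ)|) =ᵐ[volume] fun θ => |ψ₁ θ| := by
    filter_upwards [E₁, ED] with θ h1 hDq
    rw [inner_sub_left, h1, hDq]
    congr 1
    simp only [hψ₁def]
    ring
  have A₂ : (fun θ => |(inner ℝ (n₂ θ - nD θ) (rotvec θ) : ℝ)|) =ᵐ[volume] fun θ => |ψ₂ θ| := by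
    filter_upwards [E₂, ED] with θ h2 hDq
    rw [inner_sub_left, h2, hDq]
    congr 1
    simp only [hψ₂def]
    ring
  have A₀ : (fun θ => |(inner ℝ (n θ - nD θ) (rotvec θ) : ℝ)|) =ᵐ[volume]
      fun θ => |t * ψ₁ θ + (1 - t) * ψ₂ θ| := by
    filter_upwards [En, ED] with θ hnθ hDq
    rw [inner_sub_left, hnθ, hDq]
    congr 1
    simp only [hψ₁def, hψ₂def]
    ring
  -- integrability
  have hμ : volume (Set.uIoc (0:ℝ) (2*π)) < ⊤ := by
    rw [Set.uIoc]
    exact measure_Ioc_lt_top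
  haveI : IsFiniteMeasure (volume.restrict (Set.uIoc (0:ℝ) (2*π))) :=
    ⟨by rwa [Measure.restrict_apply_univ]⟩
  have int₁ : IntervalIntegrable (fun θ => |ψ₁ θ|) volume 0 (2*π) := by
    rw [intervalIntegrable_iff]
    apply Integrable.mono' (integrable_const (R₁ + RD))
      ((mψ₁.abs).aestronglyMeasurable.restrict)
    filter_upwards [ae_restrict_of_ae B₁] with θ hθ
    rwa [Real.norm_eq_abs, abs_abs]
  have int₂ : IntervalIntegrable (fun θ => |ψ₂ θ|) volume 0 (2*π) := by
    rw [intervalIntegrable_iff]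
    apply Integrable.mono' (integrable_const (R₂ + RD))
      ((mψ₂.abs).aestronglyMeasurable.restrict)
    filter_upwards [ae_restrict_of_ae B₂] with θ hθ
    rwa [Real.norm_eq_abs, abs_abs]
  have int₀ : IntervalIntegrable (fun θ => |t * ψ₁ θ + (1 - t) * ψ₂ θ|) volume 0 (2*π) := by
    rw [intervalIntegrable_iff]
    apply Integrable.mono' (integrable_const ((R₁ + RD) + (R₂ + RD)))
      (((((mψ₁.const_mul t).add (mψ₂.const_mul (1-t))).abs).aestronglyMeasurable).restrict)
    filter_upwards [ae_restrict_of_ae B₁, ae_restrict_of_ae B₂] with θ h1 h2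
    rw [Real.norm_eq_abs, abs_abs]
    have ht1' : (0:ℝ) ≤ 1 - t := by linarith
    calc |t * ψ₁ θ + (1 - t) * ψ₂ θ| ≤ |t * ψ₁ θ| + |(1 - t) * ψ₂ θ| := abs_add_le _ _
      _ = t * |ψ₁ θ| + (1 - t) * |ψ₂ θ| := by
          rw [abs_mul, abs_mul, abs_of_nonneg ht₀, abs_of_nonneg ht1']
      _ ≤ 1 * |ψ₁ θ| + 1 * |ψ₂ θ| := by
          apply add_le_add
          · exact mul_le_mul_of_nonneg_right ht₁ (abs_nonneg _)
          · exact mul_le_mul_of_nonneg_right (by linarith) (abs_nonneg _)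
      _ = |ψ₁ θ| + |ψ₂ θ| := by ring
      _ ≤ (R₁ + RD) + (R₂ + RD) := add_le_add h1 h2
  -- rewrite the three integrals
  have hae_uIoc : ∀ {f g : ℝ → ℝ}, f =ᵐ[volume] g →
      ∫ θ in (0:ℝ)..(2*π), f θ = ∫ θ in (0:ℝ)..(2*π), g θ := by
    intro f g hfg
    apply intervalIntegral.integral_congr_ae
    filter_upwards [hfg] with θ hθ _ using hθ
  have e₀ : ∫ θ in (0:ℝ)..(2*π), |(inner ℝ (n θ - nD θ) (rotvec θ) : ℝ)| =
      ∫ θ in (0:ℝ)..(2*π), |t * ψ₁ θ + (1 - t) * ψ₂ θ| := hae_uIoc A₀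
  have e₁ : ∫ θ in (0:ℝ)..(2*π), |(inner ℝ (n₁ θ - nD θ) (rotvec θ) : ℝ)| =
      ∫ θ in (0:ℝ)..(2*π), |ψ₁ θ| := hae_uIoc A₁
  have e₂ : ∫ θ in (0:ℝ)..(2*π), |(inner ℝ (n₂ θ - nD θ) (rotvec θ) : ℝ)| =
      ∫ θ in (0:ℝ)..(2*π), |ψ₂ θ| := hae_uIoc A₂
  -- main estimate
  have hle : ∫ θ in (0:ℝ)..(2*π), |t * ψ₁ θ + (1 - t) * ψ₂ θ| ≤
      ∫ θ in (0:ℝ)..(2*π), (t * |ψ₁ θ| + (1 - t) * |ψ₂ θ|) := by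
    apply intervalIntegral.integral_mono_on (by positivity) int₀
      ((int₁.const_mul t).add (int₂.const_mul (1-t)))
    intro s _
    calc |t * ψ₁ s + (1 - t) * ψ₂ s| ≤ |t * ψ₁ s| + |(1 - t) * ψ₂ s| := abs_add_le _ _
      _ = t * |ψ₁ s| + (1 - t) * |ψ₂ s| := by
          rw [abs_mul, abs_mul, abs_of_nonneg ht₀, abs_of_nonneg (by linarith : (0:ℝ) ≤ 1 - t)]
  have hsplit : ∫ θ in (0:ℝ)..(2*π), (t * |ψ₁ θ| + (1 - t) * |ψ₂ θ|) =
      t * (∫ θ in (0:ℝ)..(2*π), |ψ₁ θ|) + (1 - t) * (∫ θ in (0:ℝ)..(2*π), |ψ₂ θ|) := by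
    rw [intervalIntegral.integral_add (int₁.const_mul t) (int₂.const_mul (1-t)),
      intervalIntegral.integral_const_mul, intervalIntegral.integral_const_mul]
  -- conclude
  rw [pdistN, pdistN, pdistN, e₀, e₁, e₂]
  calc (1/2 : ℝ) * ∫ θ in (0:ℝ)..(2*π), |t * ψ₁ θ + (1 - t) * ψ₂ θ|
      ≤ (1/2 : ℝ) * ∫ θ in (0:ℝ)..(2*π), (t * |ψ₁ θ| + (1 - t) * |ψ₂ θ|) := by linarith
    _ = t * ((1/2 : ℝ) * ∫ θ in (0:ℝ)..(2*π), |ψ₁ θ|) +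
        (1 - t) * ((1/2 : ℝ) * ∫ θ in (0:ℝ)..(2*π), |ψ₂ θ|) := by rw [hsplit]; ring

end
end

section
/- For a planar convex body D of constant width and a point v in the interior of D, pdist(v, D) < diam(D). -/
open MeasureTheory Real Set

noncomputable section
namespace PDAux

lemma inner_ex (x y : E2) : (inner ℝ x y : ℝ) = x 0 * y 0 + x 1 * y 1 := by
  simp [PiLp.inner_apply, Fin.sum_univ_two]; ring

lemma iuu (θ θ' : ℝ) : (inner ℝ (uvec θ) (uvec θ') : ℝ) = Real.cos (θ' - θ) := by
  simp [inner_ex, uvec, Real.cos_sub]; ring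

lemma iru (θ θ' : ℝ) : (inner ℝ (rotvec θ) (uvec θ') : ℝ) = Real.sin (θ - θ') := by
  simp [inner_ex, uvec, rotvec, Real.sin_sub]; ring

lemma iur (θ θ' : ℝ) : (inner ℝ (uvec θ) (rotvec θ') : ℝ) = Real.sin (θ' - θ) := by
  simp [inner_ex, uvec, rotvec, Real.sin_sub]; ring

lemma irr (θ θ' : ℝ) : (inner ℝ (rotvec θ) (rotvec θ') : ℝ) = Real.cos (θ' - θ) := by
  simp [inner_ex, uvec, rotvec, Real.cos_sub]; ring

lemma norm_uvec (θ : ℝ) : ‖uvec θ‖ = 1 := by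
  have h1 : (inner ℝ (uvec θ) (uvec θ) : ℝ) = 1 := by rw [iuu]; simp
  have h2 := real_inner_self_eq_norm_sq (uvec θ)
  nlinarith [norm_nonneg (uvec θ)]

lemma decomp (y : E2) (θ : ℝ) :
    y = (inner ℝ y (uvec θ) : ℝ) • uvec θ + (inner ℝ y (rotvec θ) : ℝ) • rotvec θ := by
  have h := Real.sin_sq_add_cos_sq θ
  ext i
  fin_cases i
  · simp [inner_ex, uvec, rotvec, PiLp.add_apply, PiLp.smul_apply, smul_eq_mul]
    linear_combination (-(y 0)) * h
  · simp [inner_ex, uvec, rotvec, PiLp.add_apply, PiLp.smul_apply, smul_eq_mul]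
    linear_combination (-(y 1)) * h

lemma expandU (y : E2) (θ τ : ℝ) :
    (inner ℝ y (uvec τ) : ℝ)
      = (inner ℝ y (uvec θ) : ℝ) * Real.cos (τ - θ) - (inner ℝ y (rotvec θ) : ℝ) * Real.sin (τ - θ) := by
  have h := Real.sin_sq_add_cos_sq θ
  simp only [inner_ex, uvec, rotvec, Real.cos_sub, Real.sin_sub,
    Matrix.cons_val_zero, Matrix.cons_val_one, Matrix.head_cons]
  linear_combination (-(y 0 * Real.cos τ + y 1 * Real.sin τ)) * h

lemma expandR (y : E2) (θ τ : ℝ) :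
    (inner ℝ y (rotvec τ) : ℝ)
      = (inner ℝ y (uvec θ) : ℝ) * Real.sin (τ - θ) + (inner ℝ y (rotvec θ) : ℝ) * Real.cos (τ - θ) := by
  have h := Real.sin_sq_add_cos_sq θ
  simp only [inner_ex, uvec, rotvec, Real.cos_sub, Real.sin_sub,
    Matrix.cons_val_zero, Matrix.cons_val_one, Matrix.head_cons]
  linear_combination (-(y 0 * Real.sin τ - y 1 * Real.cos τ)) * h

lemma uvec_pi (θ : ℝ) : uvec (θ + π) = -uvec θ := by
  ext i
  fin_cases i <;>
    simp [uvec, Real.cos_add, Real.sin_add, PiLp.neg_apply]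

lemma rotvec_pi (θ : ℝ) : rotvec (θ + π) = -rotvec θ := by
  ext i
  fin_cases i <;>
    simp [rotvec, Real.cos_add, Real.sin_add, PiLp.neg_apply]

lemma cont_uvec : Continuous uvec := by
  apply (PiLp.continuous_toLp (p := 2) (β := fun _ : Fin 2 => ℝ)).comp
  refine continuous_pi ?_
  intro i
  fin_cases i
  · simpa only [uvec, Fin.zero_eta, Matrix.cons_val_zero] using Real.continuous_cos
  · simpa only [uvec, Fin.mk_one, Matrix.cons_val_one, Matrix.head_cons, Matrix.cons_val_zero] using Real.continuous_sin

lemma cont_rotvec : Continuous rotvec := by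
  apply (PiLp.continuous_toLp (p := 2) (β := fun _ : Fin 2 => ℝ)).comp
  refine continuous_pi ?_
  intro i
  fin_cases i
  · simpa only [rotvec, Fin.zero_eta, Matrix.cons_val_zero] using Real.continuous_sin
  · simp only [rotvec, Fin.mk_one, Matrix.cons_val_one, Matrix.head_cons, Matrix.cons_val_zero]
    exact Real.continuous_cos.neg

lemma norm_uvec_sub (θ₁ θ₂ : ℝ) : ‖uvec θ₁ - uvec θ₂‖ ≤ |θ₁ - θ₂| := by
  have h1 : ‖uvec θ₁ - uvec θ₂‖ ^ 2 = 2 - 2 * Real.cos (θ₁ - θ₂) := by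
    rw [norm_sub_sq_real, norm_uvec, norm_uvec, iuu]
    rw [show θ₁ - θ₂ = -(θ₂ - θ₁) by ring, Real.cos_neg]
    ring
  have h2 : 1 - (θ₁ - θ₂) ^ 2 / 2 ≤ Real.cos (θ₁ - θ₂) := Real.one_sub_sq_div_two_le_cos
  have h3 : ‖uvec θ₁ - uvec θ₂‖ ^ 2 ≤ |θ₁ - θ₂| ^ 2 := by
    rw [h1, sq_abs]; nlinarith
  nlinarith [norm_nonneg (uvec θ₁ - uvec θ₂), abs_nonneg (θ₁ - θ₂)]

lemma sub_sin_le (δ : ℝ) (h0 : 0 ≤ δ) (h1 : δ ≤ 1) : |δ - Real.sin δ| ≤ δ ^ 2 := by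
  rcases eq_or_lt_of_le h0 with h | h
  · simp [← h]
  · have hs := Real.sin_gt_sub_cube h
    have hs2 := Real.sin_le h0
    have : δ ^ 3 / 6 ≤ δ ^ 2 := by nlinarith
    rw [abs_of_nonneg (by linarith)]
    linarith

lemma sub_sin (δ : ℝ) (h1 : |δ| ≤ 1) : |δ - Real.sin δ| ≤ δ ^ 2 := by
  rcases le_or_gt 0 δ with h | h
  · exact sub_sin_le δ h (by rwa [abs_of_nonneg h] at h1)
  · have := sub_sin_le (-δ) (by linarith) (by rwa [abs_of_neg h] at h1)
    rw [Real.sin_neg] at this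
    calc |δ - Real.sin δ| = |(-δ) - (-Real.sin δ)| := by rw [← abs_neg]; ring_nf
    _ ≤ (-δ) ^ 2 := this
    _ = δ ^ 2 := by ring

lemma one_sub_cos (δ : ℝ) : 1 - Real.cos δ ≤ δ ^ 2 / 2 := by
  have := Real.one_sub_sq_div_two_le_cos (x := δ)
  linarith


def Pf (n : ℝ → E2) (x : E2) (θ : ℝ) : ℝ := inner ℝ (x - n θ) (uvec θ)
def Gf (n : ℝ → E2) (x : E2) (θ : ℝ) : ℝ := inner ℝ (x - n θ) (rotvec θ)

section Geom

variable {D : Set E2} {w : ℝ} {n : ℝ → E2}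

lemma P_nonneg (hn : IsNormalSel D n) {x : E2} (hx : x ∈ D) (θ : ℝ) : 0 ≤ Pf n x θ := by
  have := (hn θ).2 x hx
  simp only [Pf, inner_sub_left]
  linarith

/-- diameter bound from constant width -/
lemma dist_le_width (hD : IsCompact D) (hw : ConstantWidth D w) (h0 : 0 ≤ w)
    {x y : E2} (hx : x ∈ D) (hy : y ∈ D) : ‖x - y‖ ≤ w := by
  rcases eq_or_ne x y with rfl | hne
  · simpa using h0
  · have hxy : (0:ℝ) < ‖x - y‖ := by
      rw [norm_pos_iff, sub_ne_zero]; exact hne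
    set d : E2 := ‖x - y‖⁻¹ • (x - y) with hd
    have hnd : ‖d‖ = 1 := by
      rw [hd, norm_smul, norm_inv, norm_norm, inv_mul_cancel₀ (ne_of_gt hxy)]
    have hW := hw d hnd
    have hba : BddAbove ((fun z => (inner ℝ z d : ℝ)) '' D) :=
      (hD.image_of_continuousOn ((continuous_id.inner continuous_const).continuousOn)).bddAbove
    have hbb : BddBelow ((fun z => (inner ℝ z d : ℝ)) '' D) :=
      (hD.image_of_continuousOn ((continuous_id.inner continuous_const).continuousOn)).bddBelow
    have h1 : (inner ℝ x d : ℝ) ≤ sSup ((fun z => (inner ℝ z d : ℝ)) '' D) :=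
      le_csSup hba ⟨x, hx, rfl⟩
    have h2 : sInf ((fun z => (inner ℝ z d : ℝ)) '' D) ≤ (inner ℝ y d : ℝ) :=
      csInf_le hbb ⟨y, hy, rfl⟩
    have h3 : (inner ℝ (x - y) d : ℝ) = ‖x - y‖ := by
      rw [hd, real_inner_smul_right, real_inner_self_eq_norm_sq]
      field_simp
    have h4 : (inner ℝ (x - y) d : ℝ) = (inner ℝ x d : ℝ) - (inner ℝ y d : ℝ) := inner_sub_left x y d
    linarith

/-- opposite normal point -/
lemma opp (hD : IsCompact D) (hw : ConstantWidth D w) (h0 : 0 ≤ w)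
    (hn : IsNormalSel D n) (θ : ℝ) : n (θ + π) = n θ + w • uvec θ := by
  have hmem1 := (hn θ).1
  have hmem2 := (hn (θ + π)).1
  -- characterize sInf and sSup
  have hleast : IsLeast ((fun z => (inner ℝ z (uvec θ) : ℝ)) '' D) (inner ℝ (n θ) (uvec θ) : ℝ) :=
    ⟨⟨n θ, hmem1, rfl⟩, by rintro r ⟨z, hz, rfl⟩; exact (hn θ).2 z hz⟩
  have hgreat : IsGreatest ((fun z => (inner ℝ z (uvec θ) : ℝ)) '' D)
      (inner ℝ (n (θ + π)) (uvec θ) : ℝ) := by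
    constructor
    · exact ⟨n (θ + π), hmem2, rfl⟩
    · rintro r ⟨z, hz, rfl⟩
      have := (hn (θ + π)).2 z hz
      rw [uvec_pi, inner_neg_right, inner_neg_right] at this
      linarith
  have hW := hw (uvec θ) (norm_uvec θ)
  rw [hgreat.csSup_eq, hleast.csInf_eq] at hW
  set c : E2 := n (θ + π) - n θ with hc
  have hcu : (inner ℝ c (uvec θ) : ℝ) = w := by
    rw [hc, inner_sub_left]; linarith
  have hcn : ‖c‖ ≤ w := dist_le_width hD hw h0 hmem2 hmem1
  have hsq : ‖c - w • uvec θ‖ ^ 2 ≤ 0 := by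
    rw [norm_sub_sq_real, real_inner_smul_right, hcu, norm_smul, norm_uvec]
    simp only [Real.norm_eq_abs, abs_of_nonneg h0]
    ring_nf
    nlinarith [norm_nonneg c, hcn]
  have : c - w • uvec θ = 0 := by
    have := sq_nonneg ‖c - w • uvec θ‖
    have hz : ‖c - w • uvec θ‖ ^ 2 = 0 := le_antisymm hsq this
    have := pow_eq_zero_iff (n := 2) (by norm_num) |>.mp hz
    exact norm_eq_zero.mp this
  have : c = w • uvec θ := by rwa [sub_eq_zero] at this
  rw [hc] at this
  rw [← this]; abel

lemma P_antisym (hopp : ∀ θ, n (θ + π) = n θ + w • uvec θ) (x : E2) (θ : ℝ) :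
    Pf n x (θ + π) = w - Pf n x θ := by
  have huu : (inner ℝ (uvec θ) (uvec θ) : ℝ) = 1 := by rw [iuu]; simp
  have hxx : x - n (θ + π) = (x - n θ) - w • uvec θ := by rw [hopp θ]; abel
  simp only [Pf, uvec_pi, hxx, inner_neg_right, inner_sub_left, real_inner_smul_left, huu]
  ring

lemma G_antisym (hopp : ∀ θ, n (θ + π) = n θ + w • uvec θ) (x : E2) (θ : ℝ) :
    Gf n x (θ + π) = -Gf n x θ := by
  have hur : (inner ℝ (uvec θ) (rotvec θ) : ℝ) = 0 := by rw [iur]; simp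
  have hxx : x - n (θ + π) = (x - n θ) - w • uvec θ := by rw [hopp θ]; abel
  simp only [Gf, rotvec_pi, hxx, inner_neg_right, inner_sub_left, real_inner_smul_left, hur]
  ring

lemma P_le (hn : IsNormalSel D n) (hopp : ∀ θ, n (θ + π) = n θ + w • uvec θ)
    {x : E2} (hx : x ∈ D) (θ : ℝ) : Pf n x θ ≤ w := by
  have h1 := P_nonneg hn hx (θ + π)
  have h2 := P_antisym hopp x θ
  linarith

/-- the fundamental support inequality -/
lemma key (hn : IsNormalSel D n) (x : E2) (θ τ : ℝ) :
    Pf n x θ * Real.cos (τ - θ) - Gf n x θ * Real.sin (τ - θ) ≤ Pf n x τ := by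
  have h1 : (inner ℝ (n θ) (uvec τ) : ℝ) - (inner ℝ (n τ) (uvec τ) : ℝ) ≥ 0 := by
    have := (hn τ).2 (n θ) (hn θ).1
    linarith
  have h2 := expandU (x - n θ) θ τ
  have h3 : Pf n x τ = (inner ℝ (x - n θ) (uvec τ) : ℝ)
      + ((inner ℝ (n θ) (uvec τ) : ℝ) - (inner ℝ (n τ) (uvec τ) : ℝ)) := by
    simp only [Pf, inner_sub_left]; ring
  have h4 : Pf n x θ = (inner ℝ (x - n θ) (uvec θ) : ℝ) := rfl
  have h5 : Gf n x θ = (inner ℝ (x - n θ) (rotvec θ) : ℝ) := rfl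
  rw [h4, h5, h3, h2]
  linarith

lemma n_lip (hD : IsCompact D) (hw : ConstantWidth D w) (h0 : 0 ≤ w)
    (hn : IsNormalSel D n) (θ₁ θ₂ : ℝ) : ‖n θ₂ - n θ₁‖ ≤ w * |θ₂ - θ₁| := by
  set c : E2 := n θ₂ - n θ₁ with hc
  have e1 : ‖c - w • uvec θ₁‖ ≤ w := by
    have : c - w • uvec θ₁ = n θ₂ - n (θ₁ + π) := by
      rw [opp hD hw h0 hn θ₁, hc]; abel
    rw [this]
    exact dist_le_width hD hw h0 (hn θ₂).1 (hn (θ₁ + π)).1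
  have e2 : ‖c + w • uvec θ₂‖ ≤ w := by
    have : c + w • uvec θ₂ = n (θ₂ + π) - n θ₁ := by
      rw [opp hD hw h0 hn θ₂, hc]; abel
    rw [this]
    exact dist_le_width hD hw h0 (hn (θ₂ + π)).1 (hn θ₁).1
  have f1 : ‖c‖ ^ 2 - 2 * w * (inner ℝ c (uvec θ₁) : ℝ) ≤ 0 := by
    have := e1
    have hh : ‖c - w • uvec θ₁‖ ^ 2 ≤ w ^ 2 := by nlinarith [norm_nonneg (c - w • uvec θ₁)]
    rw [norm_sub_sq_real, real_inner_smul_right, norm_smul, norm_uvec] at hh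
    simp only [Real.norm_eq_abs, abs_of_nonneg h0] at hh
    nlinarith
  have f2 : ‖c‖ ^ 2 + 2 * w * (inner ℝ c (uvec θ₂) : ℝ) ≤ 0 := by
    have hh : ‖c + w • uvec θ₂‖ ^ 2 ≤ w ^ 2 := by nlinarith [norm_nonneg (c + w • uvec θ₂)]
    rw [norm_add_sq_real, real_inner_smul_right, norm_smul, norm_uvec] at hh
    simp only [Real.norm_eq_abs, abs_of_nonneg h0] at hh
    nlinarith
  have f3 : (inner ℝ c (uvec θ₁ - uvec θ₂) : ℝ) ≤ ‖c‖ * ‖uvec θ₁ - uvec θ₂‖ :=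
    real_inner_le_norm c _
  have f4 : ‖uvec θ₁ - uvec θ₂‖ ≤ |θ₁ - θ₂| := norm_uvec_sub θ₁ θ₂
  have g1 : w * ((inner ℝ c (uvec θ₁) : ℝ) - (inner ℝ c (uvec θ₂) : ℝ))
      ≤ w * (‖c‖ * ‖uvec θ₁ - uvec θ₂‖) := by
    apply mul_le_mul_of_nonneg_left _ h0
    rw [← inner_sub_right]
    exact f3
  have g2 : w * (‖c‖ * ‖uvec θ₁ - uvec θ₂‖) ≤ w * (‖c‖ * |θ₁ - θ₂|) :=
    mul_le_mul_of_nonneg_left (mul_le_mul_of_nonneg_left f4 (norm_nonneg c)) h0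
  have f5 : ‖c‖ ^ 2 ≤ w * (‖c‖ * |θ₂ - θ₁|) := by
    rw [abs_sub_comm θ₂ θ₁]
    linarith
  rcases eq_or_lt_of_le (norm_nonneg c) with h | h
  · rw [← h]; positivity
  · nlinarith

lemma n_cont (hD : IsCompact D) (hw : ConstantWidth D w) (h0 : 0 ≤ w)
    (hn : IsNormalSel D n) : Continuous n := by
  rw [Metric.continuous_iff]
  intro b ε hε
  refine ⟨ε / (w + 1), by positivity, fun a ha => ?_⟩
  have h1 : ‖n a - n b‖ ≤ w * |a - b| := n_lip hD hw h0 hn b a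
  calc dist (n a) (n b) = ‖n a - n b‖ := dist_eq_norm _ _
    _ ≤ w * |a - b| := h1
    _ = w * dist a b := by rw [Real.dist_eq]
    _ ≤ w * (ε / (w + 1)) := mul_le_mul_of_nonneg_left ha.le h0
    _ < ε := by
        rw [mul_div_assoc']
        rw [div_lt_iff₀ (by linarith : (0:ℝ) < w + 1)]
        nlinarith

lemma G_cont (hcn : Continuous n) (x : E2) : Continuous (Gf n x) :=
  (continuous_const.sub hcn).inner cont_rotvec

lemma P_cont (hcn : Continuous n) (x : E2) : Continuous (Pf n x) :=
  (continuous_const.sub hcn).inner cont_uvec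


lemma arith_bound (w p1 p2 g1 g2 δ : ℝ) (h1 : |δ| ≤ 1)
    (k1 : p1 * Real.cos δ - g1 * Real.sin δ ≤ p2)
    (k2 : p2 * Real.cos δ + g2 * Real.sin δ ≤ p1)
    (hp10 : 0 ≤ p1) (hp1w : p1 ≤ w) (hp20 : 0 ≤ p2) (hp2w : p2 ≤ w) :
    |p2 - p1 + g1 * δ| ≤ (w/2 + |g1| + |g2|) * δ^2 + |g1 - g2| * |δ| := by
  have hA1 : Real.cos δ ≤ 1 := Real.cos_le_one δ
  have hA2 : 1 - Real.cos δ ≤ δ^2/2 := one_sub_cos δ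
  have hA0 : 0 ≤ 1 - Real.cos δ := by
    have := Real.cos_le_one δ; linarith
  have hB : |δ - Real.sin δ| ≤ δ^2 := sub_sin δ h1
  have m1 : |g1 * (δ - Real.sin δ)| ≤ |g1| * δ^2 := by
    rw [abs_mul]
    exact mul_le_mul_of_nonneg_left hB (abs_nonneg g1)
  have m2 : |g2 * (δ - Real.sin δ)| ≤ |g2| * δ^2 := by
    rw [abs_mul]
    exact mul_le_mul_of_nonneg_left hB (abs_nonneg g2)
  have m1' : -(|g1| * δ^2) ≤ g1 * (δ - Real.sin δ) := by
    have := neg_abs_le (g1 * (δ - Real.sin δ))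
    linarith
  have m2' : g2 * (δ - Real.sin δ) ≤ |g2| * δ^2 := by
    have := le_abs_self (g2 * (δ - Real.sin δ))
    linarith
  have t1 : p1 * (1 - Real.cos δ) ≤ w * (δ^2/2) := by nlinarith
  have t3 : p2 * (1 - Real.cos δ) ≤ w * (δ^2/2) := by nlinarith
  have t4 : (g1 - g2) * δ ≤ |g1 - g2| * |δ| := by
    rw [← abs_mul]
    exact le_abs_self _
  have h5 : (0:ℝ) ≤ |g2| * δ^2 := by positivity
  have h6 : (0:ℝ) ≤ |g1 - g2| * |δ| := by positivity
  have h7 : (0:ℝ) ≤ |g1| * δ^2 := by positivity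
  rw [abs_le]
  constructor
  · have lower : p2 - p1 + g1 * δ
        = (p2 - (p1 * Real.cos δ - g1 * Real.sin δ)) - p1 * (1 - Real.cos δ)
          + g1 * (δ - Real.sin δ) := by ring
    rw [lower]
    nlinarith
  · have upper : p2 - p1 + g1 * δ
        = (p2 * Real.cos δ + g2 * Real.sin δ - p1) + p2 * (1 - Real.cos δ)
          + (g1 - g2) * δ + g2 * (δ - Real.sin δ) := by ring
    rw [upper]
    nlinarith

lemma E_bound (hn : IsNormalSel D n) (hopp : ∀ θ, n (θ + π) = n θ + w • uvec θ)
    {x : E2} (hx : x ∈ D) (θ τ : ℝ) (h1 : |τ - θ| ≤ 1) :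
    |Pf n x τ - Pf n x θ + Gf n x θ * (τ - θ)|
      ≤ (w/2 + |Gf n x θ| + |Gf n x τ|) * (τ - θ)^2 + |Gf n x θ - Gf n x τ| * |τ - θ| := by
  have k1 : Pf n x θ * Real.cos (τ - θ) - Gf n x θ * Real.sin (τ - θ) ≤ Pf n x τ := key hn x θ τ
  have k2 : Pf n x τ * Real.cos (τ - θ) + Gf n x τ * Real.sin (τ - θ) ≤ Pf n x θ := by
    have := key hn x τ θ
    rw [show θ - τ = -(τ - θ) by ring, Real.cos_neg, Real.sin_neg] at this
    linarith
  exact arith_bound w (Pf n x θ) (Pf n x τ) (Gf n x θ) (Gf n x τ) (τ - θ) h1 k1 k2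
    (P_nonneg hn hx θ) (P_le hn hopp hx θ) (P_nonneg hn hx τ) (P_le hn hopp hx τ)

lemma P_deriv (hn : IsNormalSel D n) (hopp : ∀ θ, n (θ + π) = n θ + w • uvec θ)
    (hcn : Continuous n) {x : E2} (hx : x ∈ D) (θ : ℝ) :
    HasDerivAt (Pf n x) (-(Gf n x θ)) θ := by
  rw [hasDerivAt_iff_isLittleO, Asymptotics.isLittleO_iff]
  intro c hc
  have habs : (0:ℝ) ≤ |Gf n x θ| := abs_nonneg _
  have hwnn : 0 ≤ w := by
    have h1 := P_nonneg hn hx θ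
    have h2 := P_nonneg hn hx (θ + π)
    have h3 := P_antisym hopp x θ
    linarith
  set M := w/2 + 2*|Gf n x θ| + 2 with hMdef
  have hM : 0 < M := by positivity
  have hM2 : 2 ≤ M := by rw [hMdef]; linarith
  have hGc : ContinuousAt (Gf n x) θ := (G_cont hcn x).continuousAt
  rw [Metric.continuousAt_iff] at hGc
  obtain ⟨δ₁, hδ₁, hG⟩ := hGc (min (c/2) 1) (by positivity)
  rw [Metric.eventually_nhds_iff]
  refine ⟨min δ₁ (min 1 (c/(2*M))), by positivity, fun τ hτ => ?_⟩
  rw [Real.dist_eq] at hτ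
  have hs1 : |τ - θ| < δ₁ := lt_of_lt_of_le hτ (min_le_left _ _)
  have hs2 : |τ - θ| ≤ 1 := le_trans (le_of_lt hτ) (le_trans (min_le_right _ _) (min_le_left _ _))
  have hs3 : |τ - θ| ≤ c/(2*M) :=
    le_trans (le_of_lt hτ) (le_trans (min_le_right _ _) (min_le_right _ _))
  have hGd : dist (Gf n x τ) (Gf n x θ) < min (c/2) 1 := by
    apply hG
    rwa [Real.dist_eq]
  rw [Real.dist_eq] at hGd
  have hGd1 : |Gf n x θ - Gf n x τ| ≤ c/2 := by
    rw [abs_sub_comm]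
    exact le_trans (le_of_lt hGd) (min_le_left _ _)
  have hGd2 : |Gf n x τ| ≤ |Gf n x θ| + 1 := by
    have := abs_sub_abs_le_abs_sub (Gf n x τ) (Gf n x θ)
    have h2 : |Gf n x τ - Gf n x θ| ≤ 1 := le_trans (le_of_lt hGd) (min_le_right _ _)
    linarith
  have hE := E_bound hn hopp hx θ τ hs2
  have hs0 : (0:ℝ) ≤ |τ - θ| := abs_nonneg _
  have e0 : ‖Pf n x τ - Pf n x θ - (τ - θ) • (-Gf n x θ)‖
      = |Pf n x τ - Pf n x θ + Gf n x θ * (τ - θ)| := by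
    rw [smul_eq_mul, Real.norm_eq_abs]
    ring_nf
  have e1 : (w/2 + |Gf n x θ| + |Gf n x τ|) * (τ - θ)^2 ≤ M * (|τ - θ| * |τ - θ|) := by
    rw [show |τ - θ| * |τ - θ| = (τ - θ)^2 by rw [← sq_abs]; ring]
    nlinarith [sq_nonneg (τ - θ)]
  have e2 : M * (|τ - θ| * |τ - θ|) ≤ M * ((c/(2*M)) * |τ - θ|) :=
    mul_le_mul_of_nonneg_left (mul_le_mul_of_nonneg_right hs3 hs0) (le_of_lt hM)
  have e3 : M * ((c/(2*M)) * |τ - θ|) = (c/2) * |τ - θ| := by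
    field_simp
  have e4 : |Gf n x θ - Gf n x τ| * |τ - θ| ≤ (c/2) * |τ - θ| :=
    mul_le_mul_of_nonneg_right hGd1 hs0
  rw [e0, Real.norm_eq_abs]
  linarith

lemma P_ftc (hn : IsNormalSel D n) (hopp : ∀ θ, n (θ + π) = n θ + w • uvec θ)
    (hcn : Continuous n) {x : E2} (hx : x ∈ D) (α β : ℝ) :
    ∫ θ in α..β, -(Gf n x θ) = Pf n x β - Pf n x α := by
  apply intervalIntegral.integral_eq_sub_of_hasDerivAt
  · exact fun t _ => P_deriv hn hopp hcn hx t
  · exact ((G_cont hcn x).neg).intervalIntegrable α β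

lemma ptw_bound (w t G B S : ℝ) (hwp : 0 < w) (ht0 : 0 < t) (ht1 : t < w)
    (hG : G ≤ 0) (hB : 0 ≤ B) (hBe : B = G + w * S) :
    |G + t * S| * w ≤ (w - t) * (-G) + t * B := by
  have p1 : 0 ≤ (w - t) * (-G) := mul_nonneg (by linarith) (by linarith)
  have p2 : 0 ≤ t * B := mul_nonneg ht0.le hB
  rcases abs_cases (G + t * S) with ⟨he, _⟩ | ⟨he, _⟩ <;> rw [he] <;> nlinarith

lemma ptw_strict (w t G B S : ℝ) (hwp : 0 < w) (ht0 : 0 < t) (ht1 : t < w)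
    (hG : G < 0) (hB : 0 < B) (hBe : B = G + w * S) :
    |G + t * S| * w < (w - t) * (-G) + t * B := by
  have p1 : 0 < (w - t) * (-G) := mul_pos (by linarith) (by linarith)
  have p2 : 0 < t * B := mul_pos ht0 hB
  rcases abs_cases (G + t * S) with ⟨he, _⟩ | ⟨he, _⟩ <;> rw [he] <;> nlinarith

end Geom

end PDAux
end

noncomputable section
open PDAux
set_option maxHeartbeats 1000000

noncomputable section

theorem pdist_of_interior_point (D : Set E2) (hD : IsConvexBody D)
    (w : ℝ) (hw : ConstantWidth D w)
    (n : ℝ → E2) (hn : IsNormalSel D n)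
    (v : E2) (hv : v ∈ interior D) :
    ∫ θ in (0:ℝ)..π, |(inner ℝ (v - n θ) (rotvec θ) : ℝ)| < Metric.diam D := by
  obtain ⟨hcomp, hconv, hint⟩ := hD
  have hvD : v ∈ D := interior_subset hv
  obtain ⟨ε, hε, hball⟩ : ∃ ε > 0, Metric.ball v ε ⊆ D := by
    rcases Metric.mem_nhds_iff.mp (mem_interior_iff_mem_nhds.mp hv) with ⟨ε, hε, hb⟩
    exact ⟨ε, hε, hb⟩
  have h0 : 0 ≤ w := by
    have hW := hw (uvec 0) (norm_uvec 0)
    have hba : BddAbove ((fun z => (inner ℝ z (uvec 0) : ℝ)) '' D) :=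
      (hcomp.image_of_continuousOn
        ((continuous_id.inner continuous_const).continuousOn)).bddAbove
    have hbb : BddBelow ((fun z => (inner ℝ z (uvec 0) : ℝ)) '' D) :=
      (hcomp.image_of_continuousOn
        ((continuous_id.inner continuous_const).continuousOn)).bddBelow
    have h1 : (inner ℝ v (uvec 0) : ℝ) ≤ sSup ((fun z => (inner ℝ z (uvec 0) : ℝ)) '' D) :=
      le_csSup hba ⟨v, hvD, rfl⟩
    have h2 : sInf ((fun z => (inner ℝ z (uvec 0) : ℝ)) '' D) ≤ (inner ℝ v (uvec 0) : ℝ) :=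
      csInf_le hbb ⟨v, hvD, rfl⟩
    linarith
  have hopp := opp hcomp hw h0 hn
  have hcn : Continuous n := n_cont hcomp hw h0 hn
  have hPball : ∀ θ, ε/2 ≤ Pf n v θ := by
    intro θ
    have hy : v - (ε/2) • uvec θ ∈ D := by
      apply hball
      rw [Metric.mem_ball, dist_eq_norm]
      have hee : v - (ε/2) • uvec θ - v = -((ε/2) • uvec θ) := by abel
      rw [hee, norm_neg, norm_smul, norm_uvec, mul_one, Real.norm_eq_abs,
        abs_of_pos (by linarith : (0:ℝ) < ε/2)]
      linarith
    have h2 := (hn θ).2 _ hy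
    rw [inner_sub_left, real_inner_smul_left] at h2
    have huu : (inner ℝ (uvec θ) (uvec θ) : ℝ) = 1 := by rw [iuu]; simp
    rw [huu] at h2
    simp only [Pf, inner_sub_left]
    linarith
  have hwpos : 0 < w := by
    have h1 := hPball 0
    have h2 := hPball (0 + π)
    have h3 := P_antisym hopp v 0
    linarith
  obtain ⟨θ₀, hθ₀mem, hθ₀⟩ : ∃ θ₀ ∈ Icc (0:ℝ) π, Gf n v θ₀ = 0 := by
    have hGpi : Gf n v (0 + π) = -(Gf n v 0) := G_antisym hopp v 0
    rw [zero_add] at hGpi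
    rcases le_or_gt (Gf n v 0) 0 with hc | hc
    · have h01 : (0:ℝ) ∈ Icc (Gf n v 0) (Gf n v π) := ⟨hc, by rw [hGpi]; linarith⟩
      obtain ⟨θ₀, hm, he⟩ :=
        intermediate_value_Icc Real.pi_pos.le ((G_cont hcn v).continuousOn) h01
      exact ⟨θ₀, hm, he⟩
    · have h01 : (0:ℝ) ∈ Icc (Gf n v π) (Gf n v 0) := ⟨by rw [hGpi]; linarith, hc.le⟩
      obtain ⟨θ₀, hm, he⟩ :=
        intermediate_value_Icc' Real.pi_pos.le ((G_cont hcn v).continuousOn) h01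
      exact ⟨θ₀, hm, he⟩
  set t := Pf n v θ₀ with htdef
  have ht1 : ε/2 ≤ t := hPball θ₀
  have ht2 : t ≤ w - ε/2 := by
    have h2 := hPball (θ₀ + π)
    have h3 := P_antisym hopp v θ₀
    linarith
  have htw : 0 < t := lt_of_lt_of_le (by linarith) ht1
  have htw2 : t < w := by linarith
  have hva : v - n θ₀ = t • uvec θ₀ := by
    have hd := decomp (v - n θ₀) θ₀
    have e2 : (inner ℝ (v - n θ₀) (rotvec θ₀) : ℝ) = 0 := hθ₀
    rw [e2, zero_smul, add_zero] at hd
    exact hd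
  have hGv : ∀ θ, Gf n v θ = Gf n (n θ₀) θ + t * Real.sin (θ - θ₀) := by
    intro θ
    have hsplit : v - n θ = (n θ₀ - n θ) + t • uvec θ₀ := by
      rw [← hva]; abel
    simp only [Gf, hsplit, inner_add_left, real_inner_smul_left, iur]
  have hGb : ∀ θ, Gf n (n (θ₀ + π)) θ = Gf n (n θ₀) θ + w * Real.sin (θ - θ₀) := by
    intro θ
    have hsplit : n (θ₀ + π) - n θ = (n θ₀ - n θ) + w • uvec θ₀ := by
      rw [hopp θ₀]; abel
    simp only [Gf, hsplit, inner_add_left, real_inner_smul_left, iur]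
  have hGaθ₀ : Gf n (n θ₀) θ₀ = 0 := by simp [Gf]
  have hGaend : Gf n (n θ₀) (θ₀ + π) = 0 := by
    rw [G_antisym hopp (n θ₀) θ₀, hGaθ₀]; ring
  have hGbθ₀ : Gf n (n (θ₀ + π)) θ₀ = 0 := by
    rw [hGb θ₀, hGaθ₀, sub_self, Real.sin_zero]; ring
  have hGbend : Gf n (n (θ₀ + π)) (θ₀ + π) = 0 := by simp [Gf]
  -- sign of G for the endpoints of the double normal
  have hsa : ∀ θ ∈ Icc θ₀ (θ₀ + π), Gf n (n θ₀) θ ≤ 0 := by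
    rintro θ ⟨hθ1, hθ2⟩
    have hS : 0 ≤ Real.sin (θ - θ₀) :=
      Real.sin_nonneg_of_nonneg_of_le_pi (by linarith) (by linarith)
    rcases eq_or_lt_of_le hS with hS0 | hSpos
    · rcases eq_or_lt_of_le hθ2 with hend | hlt
      · rw [hend]
        exact le_of_eq hGaend
      · have hsz := (Real.sin_eq_zero_iff_of_lt_of_lt
          (by linarith [Real.pi_pos] : -π < θ - θ₀) (by linarith : θ - θ₀ < π)).mp hS0.symm
        have hθeq : θ = θ₀ := by linarith
        rw [hθeq, hGaθ₀]
    · have hPa0 : 0 ≤ Pf n (n θ₀) θ := P_nonneg hn (hn θ₀).1 θ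
      have hPaw : Pf n (n θ₀) θ ≤ w := P_le hn hopp (hn θ₀).1 θ
      have e1 : (inner ℝ (n θ₀ - n θ) (uvec θ₀) : ℝ)
          = Pf n (n θ₀) θ * Real.cos (θ - θ₀) + Gf n (n θ₀) θ * Real.sin (θ - θ₀) := by
        have hEx := expandU (n θ₀ - n θ) θ θ₀
        rw [show θ₀ - θ = -(θ - θ₀) by ring, Real.cos_neg, Real.sin_neg] at hEx
        rw [hEx]
        simp only [Pf, Gf]
        ring
      have i1 : (inner ℝ (n θ₀ - n θ) (uvec θ₀) : ℝ) ≤ 0 := by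
        have := (hn θ₀).2 (n θ) (hn θ).1
        rw [inner_sub_left]; linarith
      have e2 : (inner ℝ (n θ₀ - n (θ + π)) (uvec θ₀) : ℝ)
          = (Pf n (n θ₀) θ - w) * Real.cos (θ - θ₀) + Gf n (n θ₀) θ * Real.sin (θ - θ₀) := by
        have hsplit : n θ₀ - n (θ + π) = (n θ₀ - n θ) - w • uvec θ := by
          rw [hopp θ]; abel
        rw [hsplit, inner_sub_left, real_inner_smul_left, e1, iuu]
        rw [show θ₀ - θ = -(θ - θ₀) by ring, Real.cos_neg]
        ring
      have i2 : (inner ℝ (n θ₀ - n (θ + π)) (uvec θ₀) : ℝ) ≤ 0 := by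
        have := (hn θ₀).2 (n (θ + π)) (hn (θ + π)).1
        rw [inner_sub_left]; linarith
      rcases le_or_gt 0 (Real.cos (θ - θ₀)) with hC | hC
      · rw [e1] at i1
        nlinarith [mul_nonneg hPa0 hC]
      · rw [e2] at i2
        nlinarith [mul_nonneg (by linarith : (0:ℝ) ≤ w - Pf n (n θ₀) θ)
          (by linarith : (0:ℝ) ≤ -Real.cos (θ - θ₀))]
  have hsb : ∀ θ ∈ Icc θ₀ (θ₀ + π), 0 ≤ Gf n (n (θ₀ + π)) θ := by
    rintro θ ⟨hθ1, hθ2⟩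
    have hS : 0 ≤ Real.sin (θ - θ₀) :=
      Real.sin_nonneg_of_nonneg_of_le_pi (by linarith) (by linarith)
    rcases eq_or_lt_of_le hS with hS0 | hSpos
    · rcases eq_or_lt_of_le hθ2 with hend | hlt
      · rw [hend]
        exact le_of_eq hGbend.symm
      · have hsz := (Real.sin_eq_zero_iff_of_lt_of_lt
          (by linarith [Real.pi_pos] : -π < θ - θ₀) (by linarith : θ - θ₀ < π)).mp hS0.symm
        have hθeq : θ = θ₀ := by linarith
        rw [hθeq, hGbθ₀]
    · have hPb0 : 0 ≤ Pf n (n (θ₀ + π)) θ := P_nonneg hn (hn (θ₀ + π)).1 θ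
      have hPbw : Pf n (n (θ₀ + π)) θ ≤ w := P_le hn hopp (hn (θ₀ + π)).1 θ
      have e1 : (inner ℝ (n (θ₀ + π) - n θ) (uvec θ₀) : ℝ)
          = Pf n (n (θ₀ + π)) θ * Real.cos (θ - θ₀)
            + Gf n (n (θ₀ + π)) θ * Real.sin (θ - θ₀) := by
        have hEx := expandU (n (θ₀ + π) - n θ) θ θ₀
        rw [show θ₀ - θ = -(θ - θ₀) by ring, Real.cos_neg, Real.sin_neg] at hEx
        rw [hEx]
        simp only [Pf, Gf]
        ring
      have j1 : 0 ≤ (inner ℝ (n (θ₀ + π) - n θ) (uvec θ₀) : ℝ) := by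
        have hj := (hn (θ₀ + π)).2 (n θ) (hn θ).1
        rw [uvec_pi, inner_neg_right, inner_neg_right] at hj
        rw [inner_sub_left]; linarith
      have e2 : (inner ℝ (n (θ₀ + π) - n (θ + π)) (uvec θ₀) : ℝ)
          = (Pf n (n (θ₀ + π)) θ - w) * Real.cos (θ - θ₀)
            + Gf n (n (θ₀ + π)) θ * Real.sin (θ - θ₀) := by
        have hsplit : n (θ₀ + π) - n (θ + π) = (n (θ₀ + π) - n θ) - w • uvec θ := by
          rw [hopp θ]; abel
        rw [hsplit, inner_sub_left, real_inner_smul_left, e1, iuu]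
        rw [show θ₀ - θ = -(θ - θ₀) by ring, Real.cos_neg]
        ring
      have j2 : 0 ≤ (inner ℝ (n (θ₀ + π) - n (θ + π)) (uvec θ₀) : ℝ) := by
        have hj := (hn (θ₀ + π)).2 (n (θ + π)) (hn (θ + π)).1
        rw [uvec_pi, inner_neg_right, inner_neg_right] at hj
        rw [inner_sub_left]; linarith
      rcases le_or_gt (Real.cos (θ - θ₀)) 0 with hC | hC
      · rw [e1] at j1
        nlinarith [mul_nonneg hPb0 (by linarith : (0:ℝ) ≤ -Real.cos (θ - θ₀))]
      · rw [e2] at j2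
        nlinarith [mul_nonneg (by linarith : (0:ℝ) ≤ w - Pf n (n (θ₀ + π)) θ) hC.le]
  -- integral identities
  have hIa : (∫ θ in θ₀..(θ₀ + π), -(Gf n (n θ₀) θ)) = w := by
    rw [P_ftc hn hopp hcn (hn θ₀).1 θ₀ (θ₀ + π)]
    have h1 : Pf n (n θ₀) θ₀ = 0 := by simp [Pf]
    rw [P_antisym hopp (n θ₀) θ₀, h1]
    ring
  have hIb : (∫ θ in θ₀..(θ₀ + π), Gf n (n (θ₀ + π)) θ) = w := by
    have h2 := P_ftc hn hopp hcn (hn (θ₀ + π)).1 θ₀ (θ₀ + π)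
    have h1 : Pf n (n (θ₀ + π)) (θ₀ + π) = 0 := by simp [Pf]
    have h3 : Pf n (n (θ₀ + π)) θ₀ = w := by
      have hA := P_antisym hopp (n (θ₀ + π)) θ₀
      rw [h1] at hA
      linarith
    rw [intervalIntegral.integral_neg, h1, h3] at h2
    linarith
  set R : ℝ → ℝ := fun θ =>
    ((w - t) * (-(Gf n (n θ₀) θ)) + t * Gf n (n (θ₀ + π)) θ) / w with hRdef
  have hRcont : Continuous R := by
    rw [hRdef]
    apply Continuous.div_const
    exact (continuous_const.mul (G_cont hcn _).neg).add (continuous_const.mul (G_cont hcn _))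
  have hIR : (∫ θ in θ₀..(θ₀ + π), R θ) = w := by
    have hRe : ∀ θ, R θ = ((w - t) * (-(Gf n (n θ₀) θ)) + t * Gf n (n (θ₀ + π)) θ) / w :=
      fun _ => rfl
    simp only [hRe]
    rw [intervalIntegral.integral_div, intervalIntegral.integral_add
        (f := fun θ => (w - t) * -(Gf n (n θ₀) θ)) (g := fun θ => t * Gf n (n (θ₀ + π)) θ)
        ((continuous_const.mul (G_cont hcn _).neg).intervalIntegrable _ _)
        ((continuous_const.mul (G_cont hcn _)).intervalIntegrable _ _),
      intervalIntegral.integral_const_mul, intervalIntegral.integral_const_mul, hIa, hIb]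
    field_simp
    ring
  have hptw : ∀ θ ∈ Icc θ₀ (θ₀ + π), |Gf n v θ| ≤ R θ := by
    intro θ hθ
    have hRθ : R θ = ((w - t) * (-(Gf n (n θ₀) θ)) + t * Gf n (n (θ₀ + π)) θ) / w := rfl
    rw [hRθ, hGv θ, le_div_iff₀ hwpos]
    exact ptw_bound w t _ _ _ hwpos htw htw2 (hsa θ hθ) (hsb θ hθ) (hGb θ)
  have hexists : ∃ θ₁ ∈ Ioo θ₀ (θ₀ + π),
      Gf n (n θ₀) θ₁ < 0 ∧ 0 < Gf n (n (θ₀ + π)) θ₁ := by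
    by_contra hno
    push_neg at hno
    have hU1open : IsOpen {θ : ℝ | Gf n (n θ₀) θ < 0} :=
      isOpen_lt (G_cont hcn _) continuous_const
    have hU2open : IsOpen {θ : ℝ | 0 < Gf n (n (θ₀ + π)) θ} :=
      isOpen_lt continuous_const (G_cont hcn _)
    have hsub : Ioo θ₀ (θ₀ + π)
        ⊆ {θ : ℝ | Gf n (n θ₀) θ < 0} ∪ {θ : ℝ | 0 < Gf n (n (θ₀ + π)) θ} := by
      intro θ hθ
      have hS : 0 < Real.sin (θ - θ₀) :=
        Real.sin_pos_of_pos_of_lt_pi (by linarith [hθ.1]) (by linarith [hθ.2])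
      rcases lt_or_eq_of_le (hsa θ (Ioo_subset_Icc_self hθ)) with h | h
      · exact Or.inl h
      · right
        show 0 < Gf n (n (θ₀ + π)) θ
        rw [hGb θ, h, zero_add]
        exact mul_pos hwpos hS
    rcases (Ioo θ₀ (θ₀ + π) ∩ {θ : ℝ | Gf n (n θ₀) θ < 0}).eq_empty_or_nonempty with h1 | h1
    · have hz : EqOn (fun θ => Gf n (n θ₀) θ) (fun _ => (0:ℝ)) (uIcc θ₀ (θ₀ + π)) := by
        rw [uIcc_of_le (by linarith [Real.pi_pos])]
        intro θ hθ
        simp only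
        rcases eq_or_lt_of_le hθ.1 with he | hlt1
        · rw [← he]; exact hGaθ₀
        · rcases eq_or_lt_of_le hθ.2 with he2 | hlt2
          · rw [he2]; exact hGaend
          · have hmem : θ ∈ Ioo θ₀ (θ₀ + π) := ⟨hlt1, hlt2⟩
            have hnl : ¬ (Gf n (n θ₀) θ < 0) := fun hcon =>
              (eq_empty_iff_forall_notMem.mp h1 θ) ⟨hmem, hcon⟩
            exact le_antisymm (hsa θ (Ioo_subset_Icc_self hmem)) (not_lt.mp hnl)
      have hcontra : (w:ℝ) = 0 := by
        rw [← hIa]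
        have : (∫ θ in θ₀..(θ₀ + π), Gf n (n θ₀) θ) = 0 := by
          rw [intervalIntegral.integral_congr hz]
          simp
        rw [intervalIntegral.integral_neg, this]
        simp
      linarith
    · rcases (Ioo θ₀ (θ₀ + π) ∩ {θ : ℝ | 0 < Gf n (n (θ₀ + π)) θ}).eq_empty_or_nonempty
        with h2 | h2
      · have hz : EqOn (fun θ => Gf n (n (θ₀ + π)) θ) (fun _ => (0:ℝ)) (uIcc θ₀ (θ₀ + π)) := by
          rw [uIcc_of_le (by linarith [Real.pi_pos])]
          intro θ hθ
          simp only
          rcases eq_or_lt_of_le hθ.1 with he | hlt1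
          · rw [← he]; exact hGbθ₀
          · rcases eq_or_lt_of_le hθ.2 with he2 | hlt2
            · rw [he2]; exact hGbend
            · have hmem : θ ∈ Ioo θ₀ (θ₀ + π) := ⟨hlt1, hlt2⟩
              have hnl : ¬ (0 < Gf n (n (θ₀ + π)) θ) := fun hcon =>
                (eq_empty_iff_forall_notMem.mp h2 θ) ⟨hmem, hcon⟩
              exact le_antisymm (not_lt.mp hnl) (hsb θ (Ioo_subset_Icc_self hmem))
        have hcontra : (w:ℝ) = 0 := by
          rw [← hIb, intervalIntegral.integral_congr hz]
          simp
        linarith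
      · obtain ⟨θc, hcI, hcU⟩ := isPreconnected_Ioo (a := θ₀) (b := θ₀ + π)
          {θ : ℝ | Gf n (n θ₀) θ < 0} {θ : ℝ | 0 < Gf n (n (θ₀ + π)) θ}
          hU1open hU2open hsub h1 h2
        exact absurd (hno θc hcI hcU.1) (not_le.mpr hcU.2)
  obtain ⟨θ₁, hθ₁mem, hga1, hgb1⟩ := hexists
  have hstrict : |Gf n v θ₁| < R θ₁ := by
    have hRθ : R θ₁ = ((w - t) * (-(Gf n (n θ₀) θ₁)) + t * Gf n (n (θ₀ + π)) θ₁) / w := rfl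
    rw [hRθ, hGv θ₁, lt_div_iff₀ hwpos]
    exact ptw_strict w t _ _ _ hwpos htw htw2 hga1 hgb1 (hGb θ₁)
  have hlt : (∫ θ in θ₀..(θ₀ + π), |Gf n v θ|) < ∫ θ in θ₀..(θ₀ + π), R θ := by
    apply intervalIntegral.integral_lt_integral_of_continuousOn_of_le_of_exists_lt
    · linarith [Real.pi_pos]
    · exact ((G_cont hcn v).abs).continuousOn
    · exact hRcont.continuousOn
    · intro θ hθ
      exact hptw θ (Ioc_subset_Icc_self hθ)
    · exact ⟨θ₁, Ioo_subset_Icc_self hθ₁mem, hstrict⟩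
  have hper : Function.Periodic (fun θ => |Gf n v θ|) π := by
    intro θ
    simp only
    rw [G_antisym hopp v θ, abs_neg]
  have hshift : (∫ θ in (0:ℝ)..(0 + π), |Gf n v θ|) = ∫ θ in θ₀..(θ₀ + π), |Gf n v θ| :=
    hper.intervalIntegral_add_eq 0 θ₀
  have hwdiam : w ≤ Metric.diam D := by
    obtain ⟨xM, hxM, hmax⟩ := hcomp.exists_isMaxOn
      (f := fun z : E2 => (inner ℝ z (uvec 0) : ℝ)) ⟨v, hvD⟩
      ((continuous_id.inner continuous_const).continuousOn)
    obtain ⟨xm, hxm, hmin⟩ := hcomp.exists_isMinOn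
      (f := fun z : E2 => (inner ℝ z (uvec 0) : ℝ)) ⟨v, hvD⟩
      ((continuous_id.inner continuous_const).continuousOn)
    have hgr : IsGreatest ((fun z => (inner ℝ z (uvec 0) : ℝ)) '' D) (inner ℝ xM (uvec 0) : ℝ) :=
      ⟨⟨xM, hxM, rfl⟩, by rintro r ⟨z, hz, rfl⟩; exact isMaxOn_iff.mp hmax z hz⟩
    have hle2 : IsLeast ((fun z => (inner ℝ z (uvec 0) : ℝ)) '' D) (inner ℝ xm (uvec 0) : ℝ) :=
      ⟨⟨xm, hxm, rfl⟩, by rintro r ⟨z, hz, rfl⟩; exact isMinOn_iff.mp hmin z hz⟩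
    have hW := hw (uvec 0) (norm_uvec 0)
    rw [hgr.csSup_eq, hle2.csInf_eq] at hW
    have h1 : (inner ℝ (xM - xm) (uvec 0) : ℝ) = w := by rw [inner_sub_left]; linarith
    have h2 : (inner ℝ (xM - xm) (uvec 0) : ℝ) ≤ ‖xM - xm‖ * ‖uvec 0‖ := real_inner_le_norm _ _
    rw [norm_uvec, mul_one] at h2
    have h3 : ‖xM - xm‖ ≤ Metric.diam D := by
      rw [← dist_eq_norm]
      exact Metric.dist_le_diam_of_mem hcomp.isBounded hxM hxm
    linarith
  have hfinal : (∫ θ in (0:ℝ)..π, |(inner ℝ (v - n θ) (rotvec θ) : ℝ)|)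
      = ∫ θ in (0:ℝ)..(0 + π), |Gf n v θ| := by
    rw [zero_add]
    rfl
  rw [hfinal, hshift]
  rw [hIR] at hlt
  linarith

end
end
end

section
/- Every planar convex body D is contained in a body D′ of constant width with diam(D′) = diam(D). -/
open MeasureTheory Real Set

noncomputable section

section AuxCW
open Real Set Filter Topology Bornology

lemma e2_inner (x y : E2) : (inner ℝ x y : ℝ) = x 0 * y 0 + x 1 * y 1 := by
  simp [PiLp.inner_apply, Fin.sum_univ_two, RCLike.inner_apply, mul_comm]

lemma e2_smul (r : ℝ) (x : E2) (i : Fin 2) : (r • x) i = r * x i := rfl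
lemma e2_add (x y : E2) (i : Fin 2) : (x + y) i = x i + y i := rfl
lemma e2_sub (x y : E2) (i : Fin 2) : (x - y) i = x i - y i := rfl

lemma e2_norm_one_iff (x : E2) (h : x 0 ^2 + x 1 ^2 = 1) : ‖x‖ = 1 := by
  have h2 : (inner ℝ x x : ℝ) = 1 := by rw [e2_inner]; nlinarith
  have h3 : ‖x‖ ^ 2 = 1 := by rw [← real_inner_self_eq_norm_sq, h2]
  nlinarith [norm_nonneg x]

example (d : E2) (hd : ‖d‖ = 1) : d 0 ^2 + d 1^2 = 1 := by
  have := real_inner_self_eq_norm_sq d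
  rw [e2_inner, hd] at this; nlinarith

def rot (d : E2) : E2 := WithLp.toLp 2 ![d 1, -(d 0)]

section dir
variable {d : E2}

lemma rot0 (d : E2) : rot d 0 = d 1 := rfl
lemma rot1 (d : E2) : rot d 1 = -(d 0) := rfl

lemma hd01 (hd : ‖d‖ = 1) : d 0 ^ 2 + d 1 ^ 2 = 1 := by
  have := real_inner_self_eq_norm_sq d
  rw [e2_inner, hd] at this; nlinarith

lemma inner_rot_d (d : E2) : (inner ℝ (rot d) d : ℝ) = 0 := by
  rw [e2_inner, rot0, rot1]; ring

lemma inner_d_rot (d : E2) : (inner ℝ d (rot d) : ℝ) = 0 := by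
  rw [real_inner_comm]; exact inner_rot_d d

lemma inner_rot_rot (hd : ‖d‖ = 1) : (inner ℝ (rot d) (rot d) : ℝ) = 1 := by
  rw [e2_inner, rot0, rot1]; nlinarith [hd01 hd]

lemma inner_dd (hd : ‖d‖ = 1) : (inner ℝ d d : ℝ) = 1 := by
  rw [e2_inner]; nlinarith [hd01 hd]

/-- expansion in the orthonormal basis (rot d, d) -/
lemma e2_expand (hd : ‖d‖ = 1) (x : E2) :
    x = (inner ℝ x (rot d) : ℝ) • rot d + (inner ℝ x d : ℝ) • d := by
  have h := hd01 hd
  ext i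
  fin_cases i
  · simp only [Fin.zero_eta, Fin.mk_one, e2_add, e2_smul, e2_inner, rot0, rot1]
    linear_combination (-(x 0)) * h
  · simp only [Fin.zero_eta, Fin.mk_one, e2_add, e2_smul, e2_inner, rot0, rot1]
    linear_combination (-(x 1)) * h

def edir (d : E2) (t : ℝ) : E2 := Real.cos t • rot d + Real.sin t • d

lemma inner_edir_left (t : ℝ) (x : E2) :
    (inner ℝ (edir d t) x : ℝ) = Real.cos t * inner ℝ (rot d) x + Real.sin t * inner ℝ d x := by
  simp only [edir, inner_add_left, real_inner_smul_left]

lemma inner_edir_d (hd : ‖d‖ = 1) (t : ℝ) : (inner ℝ (edir d t) d : ℝ) = Real.sin t := by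
  rw [inner_edir_left, inner_rot_d d, inner_dd hd]; ring

lemma inner_d_edir (hd : ‖d‖ = 1) (t : ℝ) : (inner ℝ d (edir d t) : ℝ) = Real.sin t := by
  rw [real_inner_comm]; exact inner_edir_d hd t

lemma inner_edir_rot (hd : ‖d‖ = 1) (t : ℝ) : (inner ℝ (edir d t) (rot d) : ℝ) = Real.cos t := by
  rw [inner_edir_left, inner_rot_rot hd, inner_d_rot d]; ring

lemma inner_rot_edir (hd : ‖d‖ = 1) (t : ℝ) : (inner ℝ (rot d) (edir d t) : ℝ) = Real.cos t := by
  rw [real_inner_comm]; exact inner_edir_rot hd t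

lemma inner_edir_edir (hd : ‖d‖ = 1) (s t : ℝ) :
    (inner ℝ (edir d s) (edir d t) : ℝ) = Real.cos (s - t) := by
  rw [inner_edir_left, inner_rot_edir hd, inner_d_edir hd, Real.cos_sub]

lemma norm_edir (hd : ‖d‖ = 1) (t : ℝ) : ‖edir d t‖ = 1 := by
  have h : (inner ℝ (edir d t) (edir d t) : ℝ) = 1 := by
    rw [inner_edir_edir hd, sub_self, Real.cos_zero]
  have h3 : ‖edir d t‖ ^ 2 = 1 := by rw [← real_inner_self_eq_norm_sq, h]
  nlinarith [norm_nonneg (edir d t)]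

lemma edir_pi_div_two (d : E2) : edir d (π/2) = d := by
  simp [edir]

/-- the sum of two edirs is a positive multiple of the bisector edir -/
lemma edir_add_edir' (d : E2) (m δ : ℝ) :
    edir d (m + δ) + edir d (m - δ) = (2 * Real.cos δ) • edir d m := by
  simp only [edir, Real.cos_add, Real.cos_sub, Real.sin_add, Real.sin_sub, smul_add,
    smul_smul]
  module

lemma edir_add_edir (d : E2) (t₁ t₂ : ℝ) :
    edir d t₁ + edir d t₂
      = (2 * Real.cos ((t₁ - t₂)/2)) • edir d ((t₁ + t₂)/2) := by
  have h1 : t₁ = (t₁+t₂)/2 + (t₁-t₂)/2 := by ring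
  have h2 : t₂ = (t₁+t₂)/2 - (t₁-t₂)/2 := by ring
  have h := edir_add_edir' d ((t₁+t₂)/2) ((t₁-t₂)/2)
  rw [show (t₁+t₂)/2 + (t₁-t₂)/2 = t₁ by ring, show (t₁+t₂)/2 - (t₁-t₂)/2 = t₂ by ring] at h
  exact h

end dir

section complete
variable {M : Set E2} {w : ℝ}

/-- In a maximal set, pushing the maximizer p outward yields a diametral partner. -/
lemma violator_limit (hw : 0 < w) (hcomp : IsCompact M)
    (hpair : ∀ x ∈ M, ∀ y ∈ M, dist x y ≤ w)
    (hmax : ∀ y : E2, (∀ x ∈ M, dist y x ≤ w) → y ∈ M)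
    {p : E2} (hp : p ∈ M) {d : E2}
    (hmaxp : ∀ y ∈ M, (inner ℝ y d : ℝ) ≤ (inner ℝ p d : ℝ))
    {n : E2} (hn : ‖n‖ = 1) (hnd : 0 < (inner ℝ n d : ℝ)) :
    ∃ q ∈ M, dist p q = w ∧ 0 ≤ (inner ℝ (p - q) n : ℝ) := by
  set ε : ℕ → ℝ := fun k => 1 / (k + 1) with hε
  have hεpos : ∀ k, 0 < ε k := fun k => by positivity
  have hstep : ∀ k : ℕ, ∃ z ∈ M, w < dist (p + ε k • n) z := by
    intro k
    by_contra hcon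
    push_neg at hcon
    have hmem : p + ε k • n ∈ M := hmax _ (fun x hx => hcon x hx)
    have := hmaxp _ hmem
    rw [inner_add_left, real_inner_smul_left] at this
    nlinarith [hεpos k]
  choose z hzM hz using hstep
  obtain ⟨q, hqM, φ, hφ, hconv⟩ := hcomp.tendsto_subseq hzM
  have hεφ : Tendsto (fun k => ε (φ k)) atTop (𝓝 0) := by
    have h1 : Tendsto ε atTop (𝓝 0) := tendsto_one_div_add_atTop_nhds_zero_nat
    exact h1.comp hφ.tendsto_atTop
  refine ⟨q, hqM, ?_, ?_⟩
  · refine le_antisymm (hpair p hp q hqM) ?_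
    have hlb : ∀ k, w - ε (φ k) ≤ dist p (z (φ k)) := by
      intro k
      have h1 := hz (φ k)
      have h2 : dist (p + ε (φ k) • n) p = ε (φ k) := by
        rw [dist_eq_norm, add_sub_cancel_left, norm_smul, hn]
        simp [abs_of_pos (hεpos (φ k))]
      have h3 := dist_triangle (p + ε (φ k) • n) p (z (φ k))
      linarith
    have hdist : Tendsto (fun k => dist p (z (φ k))) atTop (𝓝 (dist p q)) :=
      (tendsto_const_nhds.dist hconv)
    have hwlim : Tendsto (fun k => w - ε (φ k)) atTop (𝓝 w) := by
      simpa using tendsto_const_nhds.sub hεφ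
    exact le_of_tendsto_of_tendsto' hwlim hdist hlb
  · have hlb : ∀ k, -(ε (φ k)) / 2 ≤ (inner ℝ (p - z (φ k)) n : ℝ) := by
      intro k
      set e := ε (φ k) with he
      have hepos : 0 < e := hεpos (φ k)
      have h1 : w < ‖(p - z (φ k)) + e • n‖ := by
        have hh := hz (φ k)
        rw [dist_eq_norm] at hh
        have heq : p + e • n - z (φ k) = (p - z (φ k)) + e • n := by abel
        rwa [heq] at hh
      have h2 : ‖p - z (φ k)‖ ≤ w := by
        rw [← dist_eq_norm]; exact hpair p hp _ (hzM (φ k))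
      have h3 : ‖(p - z (φ k)) + e • n‖ ^ 2
          = ‖p - z (φ k)‖ ^ 2 + 2 * (e * (inner ℝ (p - z (φ k)) n : ℝ)) + e ^ 2 := by
        rw [norm_add_sq_real, real_inner_smul_right, norm_smul, hn]
        rw [Real.norm_eq_abs, abs_of_pos hepos]
        ring
      have h4 : w^2 < ‖(p - z (φ k)) + e • n‖^2 := by
        nlinarith [norm_nonneg ((p - z (φ k)) + e • n)]
      have h5 : ‖p - z (φ k)‖^2 ≤ w^2 := by nlinarith [norm_nonneg (p - z (φ k))]
      have h6 : 0 < 2 * (e * (inner ℝ (p - z (φ k)) n : ℝ)) + e^2 := by linarith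
      by_contra hX
      push_neg at hX
      nlinarith [mul_lt_mul_of_pos_left hX hepos]
    have hinner : Tendsto (fun k => (inner ℝ (p - z (φ k)) n : ℝ)) atTop
        (𝓝 (inner ℝ (p - q) n : ℝ)) :=
      (tendsto_const_nhds.sub hconv).inner tendsto_const_nhds
    have h0 : Tendsto (fun k => -(ε (φ k)) / 2) atTop (𝓝 0) := by
      have := (hεφ.neg).div_const (2:ℝ)
      simpa using this
    exact le_of_tendsto_of_tendsto' h0 hinner hlb

/-- the normalized-sum ("bisector") of two diametral chords is again a chord. -/
lemma midpoint_chord (hw : 0 < w)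
    (hpair : ∀ x ∈ M, ∀ y ∈ M, dist x y ≤ w)
    (hmax : ∀ y : E2, (∀ x ∈ M, dist y x ≤ w) → y ∈ M)
    {p q₁ q₂ : E2} (hp : p ∈ M) (hq₁ : q₁ ∈ M) (hq₂ : q₂ ∈ M)
    (h1 : dist p q₁ = w) (h2 : dist p q₂ = w) :
    p - (w / ‖(p - q₁) + (p - q₂)‖) • ((p - q₁) + (p - q₂)) ∈ M := by
  set u := (p - q₁) + (p - q₂) with hu
  have hn1 : ‖p - q₁‖ = w := by rw [← dist_eq_norm]; exact h1
  have hn2 : ‖p - q₂‖ = w := by rw [← dist_eq_norm]; exact h2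
  have hune : u ≠ 0 := by
    intro h0
    have : p - q₂ = -(p - q₁) := by
      rw [hu] at h0; linear_combination (norm := abel) h0
    have hq12 : q₁ - q₂ = (-(2:ℝ)) • (p - q₁) := by
      rw [show q₁ - q₂ = (p - q₂) - (p - q₁) from by abel, this]
      module
    have hd12 : dist q₁ q₂ = 2 * w := by
      rw [dist_eq_norm, hq12, norm_smul, hn1]
      norm_num
    have := hpair q₁ hq₁ q₂ hq₂
    linarith
  have hs : 0 < ‖u‖ := norm_pos_iff.mpr hune
  have hs2 : ‖u‖ ≤ 2 * w := by
    calc ‖u‖ ≤ ‖p - q₁‖ + ‖p - q₂‖ := norm_add_le _ _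
    _ = 2 * w := by rw [hn1, hn2]; ring
  apply hmax
  intro x hx
  set a := x - p with ha
  have haw : ‖a‖ ≤ w := by rw [ha, ← dist_eq_norm]; exact hpair x hx p hp
  have key : ∀ q : E2, q ∈ M → dist p q = w → (inner ℝ a (p - q) : ℝ) ≤ -‖a‖^2 / 2 := by
    intro q hq hdq
    have hxq : ‖a + (p - q)‖ ≤ w := by
      have : a + (p - q) = x - q := by rw [ha]; abel
      rw [this, ← dist_eq_norm]
      exact hpair x hx q hq
    have hnq : ‖p - q‖ = w := by rw [← dist_eq_norm]; exact hdq
    have hexp := norm_add_sq_real a (p - q)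
    rw [hnq] at hexp
    nlinarith [norm_nonneg (a + (p - q)), norm_nonneg a]
  have k1 := key q₁ hq₁ h1
  have k2 := key q₂ hq₂ h2
  have hau : (inner ℝ a u : ℝ) ≤ -‖a‖^2 := by
    rw [hu, inner_add_right]; linarith
  have hgoal : p - (w / ‖u‖) • u - x = -(a + (w / ‖u‖) • u) := by rw [ha]; abel
  rw [dist_eq_norm, hgoal, norm_neg]
  have hexp2 : ‖a + (w / ‖u‖) • u‖ ^ 2
      = ‖a‖^2 + 2 * ((w / ‖u‖) * (inner ℝ a u : ℝ)) + (w / ‖u‖)^2 * ‖u‖^2 := by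
    rw [norm_add_sq_real, real_inner_smul_right, norm_smul]
    rw [Real.norm_eq_abs, abs_of_pos (div_pos hw hs)]
    ring
  have hws : (w / ‖u‖)^2 * ‖u‖^2 = w^2 := by
    field_simp
  have hfrac : 1/2 ≤ w / ‖u‖ := by
    rw [le_div_iff₀ hs]; linarith
  have hsq : ‖a + (w / ‖u‖) • u‖ ^ 2 ≤ w ^ 2 := by
    rw [hexp2, hws]
    have h5 : (w / ‖u‖) * (inner ℝ a u : ℝ) ≤ (w / ‖u‖) * (-‖a‖^2) :=
      mul_le_mul_of_nonneg_left hau (le_of_lt (div_pos hw hs))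
    nlinarith [norm_nonneg a]
  nlinarith [norm_nonneg (a + (w / ‖u‖) • u)]

end complete

section chord
variable {M : Set E2} {w : ℝ}

lemma norm_rot {d : E2} (hd : ‖d‖ = 1) : ‖rot d‖ = 1 := by
  have h3 : ‖rot d‖ ^ 2 = 1 := by rw [← real_inner_self_eq_norm_sq, inner_rot_rot hd]
  nlinarith [norm_nonneg (rot d)]

lemma parseval {d : E2} (hd : ‖d‖ = 1) (x : E2) :
    (inner ℝ x (rot d) : ℝ)^2 + (inner ℝ x d : ℝ)^2 = (inner ℝ x x : ℝ) := by
  conv_rhs => rw [e2_expand hd x]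
  rw [e2_expand hd x]
  simp only [inner_add_left, inner_add_right, real_inner_smul_left, real_inner_smul_right,
    inner_rot_rot hd, inner_rot_d, inner_d_rot, inner_dd hd]
  ring

lemma chord_exists (hw : 0 < w) (hcomp : IsCompact M) (hne : M.Nonempty)
    (hpair : ∀ x ∈ M, ∀ y ∈ M, dist x y ≤ w)
    (hmax : ∀ y : E2, (∀ x ∈ M, dist y x ≤ w) → y ∈ M)
    {d : E2} (hd : ‖d‖ = 1) :
    ∃ p ∈ M, (∀ y ∈ M, (inner ℝ y d : ℝ) ≤ (inner ℝ p d : ℝ)) ∧ p - w • d ∈ M := by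
  have hcont : Continuous fun x : E2 => (inner ℝ x d : ℝ) := continuous_id.inner continuous_const
  obtain ⟨p, hp, hmaxp⟩ := hcomp.exists_isMaxOn hne hcont.continuousOn
  have hmaxp' : ∀ y ∈ M, (inner ℝ y d : ℝ) ≤ (inner ℝ p d : ℝ) := fun y hy => hmaxp hy
  set Θ : Set ℝ := Icc 0 π ∩ ((fun t => p - w • edir d t) ⁻¹' M) with hΘ
  have hΘmem : ∀ t, t ∈ Θ ↔ (t ∈ Icc 0 π ∧ p - w • edir d t ∈ M) := fun t => Iff.rfl
  -- every diametral partner of p corresponds to an element of Θ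
  have hpart : ∀ q ∈ M, dist p q = w → ∃ t ∈ Θ, p - q = w • edir d t := by
    intro q hq hdq
    have hpq : ‖p - q‖ = w := by rw [← dist_eq_norm]; exact hdq
    set ν := w⁻¹ • (p - q) with hν
    have hνn : ‖ν‖ = 1 := by
      rw [hν, norm_smul, Real.norm_eq_abs, abs_of_pos (inv_pos.mpr hw), hpq]
      field_simp
    have hνd : 0 ≤ (inner ℝ ν d : ℝ) := by
      rw [hν, real_inner_smul_left]
      have hsub : (inner ℝ (p - q) d : ℝ) = inner ℝ p d - inner ℝ q d := inner_sub_left p q d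
      have h2 := hmaxp' q hq
      have : (0:ℝ) ≤ inner ℝ (p - q) d := by rw [hsub]; linarith
      exact mul_nonneg (inv_nonneg.mpr hw.le) this
    have hbound := abs_real_inner_le_norm ν (rot d)
    rw [hνn, norm_rot hd, one_mul] at hbound
    set t := Real.arccos (inner ℝ ν (rot d)) with ht
    have htmem : t ∈ Icc 0 π := ⟨Real.arccos_nonneg _, Real.arccos_le_pi _⟩
    have hcos : Real.cos t = inner ℝ ν (rot d) :=
      Real.cos_arccos (abs_le.mp hbound).1 (abs_le.mp hbound).2
    have hsin : Real.sin t = inner ℝ ν d := by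
      rw [ht, Real.sin_arccos]
      have hpars := parseval hd ν
      rw [real_inner_self_eq_norm_sq, hνn] at hpars
      rw [show 1 - (inner ℝ ν (rot d) : ℝ)^2 = (inner ℝ ν d : ℝ)^2 by nlinarith]
      exact Real.sqrt_sq hνd
    have hedir : edir d t = ν := by
      rw [edir, hcos, hsin]; exact (e2_expand hd ν).symm
    have hwnu : w • ν = p - q := smul_inv_smul₀ (ne_of_gt hw) _
    refine ⟨t, ?_, by rw [hedir, hwnu]⟩
    rw [hΘmem, hedir, hwnu]
    exact ⟨htmem, by rw [sub_sub_cancel]; exact hq⟩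
  -- lemma L in angle form
  have hQ : ∀ tn, 0 < tn → tn < π → ∃ t ∈ Θ, 0 ≤ Real.cos (t - tn) := by
    intro tn h0 h1
    have hn := norm_edir hd tn
    have hnd : 0 < (inner ℝ (edir d tn) d : ℝ) := by
      rw [inner_edir_d hd]; exact Real.sin_pos_of_pos_of_lt_pi h0 h1
    obtain ⟨q, hqM, hdq, hip⟩ := violator_limit hw hcomp hpair hmax hp hmaxp' hn hnd
    obtain ⟨t, htΘ, hpq⟩ := hpart q hqM hdq
    rw [hpq, real_inner_smul_left, inner_edir_edir hd] at hip
    exact ⟨t, htΘ, by nlinarith⟩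
  -- midpoint closure of Θ
  have hmid : ∀ t₁ ∈ Θ, ∀ t₂ ∈ Θ, (t₁ + t₂)/2 ∈ Θ := by
    intro t₁ ht₁ t₂ ht₂
    obtain ⟨hI1, hM1⟩ := (hΘmem t₁).mp ht₁
    obtain ⟨hI2, hM2⟩ := (hΘmem t₂).mp ht₂
    set q₁ := p - w • edir d t₁ with hq₁
    set q₂ := p - w • edir d t₂ with hq₂
    have hpq1 : p - q₁ = w • edir d t₁ := by rw [hq₁, sub_sub_cancel]
    have hpq2 : p - q₂ = w • edir d t₂ := by rw [hq₂, sub_sub_cancel]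
    have hd1 : dist p q₁ = w := by
      rw [dist_eq_norm, hpq1, norm_smul, Real.norm_eq_abs, abs_of_pos hw, norm_edir hd, mul_one]
    have hd2 : dist p q₂ = w := by
      rw [dist_eq_norm, hpq2, norm_smul, Real.norm_eq_abs, abs_of_pos hw, norm_edir hd, mul_one]
    have hkey := midpoint_chord hw hpair hmax hp hM1 hM2 hd1 hd2
    set δ := (t₁ - t₂)/2 with hδ
    set m := (t₁ + t₂)/2 with hm
    have hsum : (p - q₁) + (p - q₂) = (w * (2 * Real.cos δ)) • edir d m := by
      rw [hpq1, hpq2, ← smul_add, edir_add_edir, smul_smul]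
    have hcosnn : 0 ≤ Real.cos δ := by
      apply Real.cos_nonneg_of_mem_Icc
      constructor
      · rw [hδ]; obtain ⟨h1, h2⟩ := hI1; obtain ⟨h3, h4⟩ := hI2; linarith
      · rw [hδ]; obtain ⟨h1, h2⟩ := hI1; obtain ⟨h3, h4⟩ := hI2; linarith
    have hcosδ : 0 < Real.cos δ := by
      have hqq := hpair q₁ hM1 q₂ hM2
      have hq12 : q₁ - q₂ = w • (edir d t₂ - edir d t₁) := by
        rw [hq₁, hq₂, smul_sub]; abel
      have hnd12 : dist q₁ q₂ = w * ‖edir d t₂ - edir d t₁‖ := by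
        rw [dist_eq_norm, hq12, norm_smul, Real.norm_eq_abs, abs_of_pos hw]
      have hsq : ‖edir d t₂ - edir d t₁‖^2 = 2 - 2 * Real.cos (2 * δ) := by
        rw [norm_sub_sq_real, inner_edir_edir hd, norm_edir hd, norm_edir hd]
        rw [show t₂ - t₁ = -(2 * δ) by rw [hδ]; ring, Real.cos_neg]
        ring
      have h1 : ‖edir d t₂ - edir d t₁‖ ≤ 1 := by
        rw [hnd12] at hqq; nlinarith
      have h2 : Real.cos (2 * δ) = 2 * Real.cos δ ^ 2 - 1 := Real.cos_two_mul δ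
      nlinarith [norm_nonneg (edir d t₂ - edir d t₁)]
    have hnorm : ‖(p - q₁) + (p - q₂)‖ = w * (2 * Real.cos δ) := by
      rw [hsum, norm_smul, Real.norm_eq_abs, abs_of_pos (by positivity), norm_edir hd, mul_one]
    have hcoef : (w / (w * (2 * Real.cos δ))) • ((w * (2 * Real.cos δ)) • edir d m)
        = w • edir d m := by
      rw [smul_smul]
      congr 1
      field_simp
    rw [hnorm, hsum, hcoef] at hkey
    rw [hΘmem]
    refine ⟨?_, hkey⟩
    constructor
    · rw [hm]; obtain ⟨h1, _⟩ := hI1; obtain ⟨h3, _⟩ := hI2; linarith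
    · rw [hm]; obtain ⟨_, h2⟩ := hI1; obtain ⟨_, h4⟩ := hI2; linarith
  -- Θ is closed and nonempty
  have hΘclosed : IsClosed Θ := by
    have hc : Continuous fun t : ℝ => p - w • edir d t := by
      apply continuous_const.sub
      refine Continuous.smul (f := fun _ => w) (g := fun t => edir d t) continuous_const ?_
      exact (Real.continuous_cos.smul continuous_const).add
        (Real.continuous_sin.smul continuous_const)
    exact isClosed_Icc.inter (hcomp.isClosed.preimage hc)
  have hΘbddA : BddAbove Θ := BddAbove.mono (inter_subset_left) bddAbove_Icc
  have hΘbddB : BddBelow Θ := BddBelow.mono (inter_subset_left) bddBelow_Icc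
  have hΘne : Θ.Nonempty := by
    obtain ⟨t, ht, _⟩ := hQ (π/2) (by positivity) (by linarith [Real.pi_pos])
    exact ⟨t, ht⟩
  -- final goal reduces to π/2 ∈ Θ
  suffices hfin : π/2 ∈ Θ by
    refine ⟨p, hp, hmaxp', ?_⟩
    have := ((hΘmem _).mp hfin).2
    rwa [edir_pi_div_two] at this
  by_cases hA : (Θ ∩ Icc 0 (π/2)).Nonempty
  · by_cases hB : (Θ ∩ Icc (π/2) π).Nonempty
    · set a := sSup (Θ ∩ Icc 0 (π/2)) with ha
      set b := sInf (Θ ∩ Icc (π/2) π) with hb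
      have haA : a ∈ Θ ∩ Icc 0 (π/2) :=
        (hΘclosed.inter isClosed_Icc).csSup_mem hA
          (BddAbove.mono (inter_subset_right) bddAbove_Icc)
      have hbB : b ∈ Θ ∩ Icc (π/2) π :=
        (hΘclosed.inter isClosed_Icc).csInf_mem hB
          (BddBelow.mono (inter_subset_right) bddBelow_Icc)
      rcases eq_or_lt_of_le haA.2.2 with heq | hlta
      · rw [← heq]; exact haA.1
      rcases eq_or_lt_of_le hbB.2.1 with heq | hltb
      · rw [heq]; exact hbB.1
      exfalso
      have hmmem := hmid a haA.1 b hbB.1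
      rcases le_or_gt ((a + b)/2) (π/2) with hle | hgt
      · have hin : (a + b)/2 ∈ Θ ∩ Icc 0 (π/2) :=
          ⟨hmmem, ⟨by obtain ⟨h1, _⟩ := haA.2; obtain ⟨h3, _⟩ := hbB.2; linarith, hle⟩⟩
        have := le_csSup (BddAbove.mono (inter_subset_right) bddAbove_Icc) hin
        rw [← ha] at this
        linarith
      · have hin : (a + b)/2 ∈ Θ ∩ Icc (π/2) π :=
          ⟨hmmem, ⟨le_of_lt hgt, by
            obtain ⟨_, h2⟩ := ((hΘmem a).mp haA.1).1
            obtain ⟨_, h4⟩ := ((hΘmem b).mp hbB.1).1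
            linarith⟩⟩
        have := csInf_le (BddBelow.mono (inter_subset_right) bddBelow_Icc) hin
        rw [← hb] at this
        linarith
    · -- all of Θ is below π/2
      exfalso
      have hforall : ∀ t ∈ Θ, t < π/2 := by
        intro t ht
        by_contra hcon
        push_neg at hcon
        exact hB ⟨t, ht, hcon, ((hΘmem t).mp ht).1.2⟩
      set a := sSup Θ with ha
      have haΘ : a ∈ Θ := hΘclosed.csSup_mem hΘne hΘbddA
      have halt : a < π/2 := hforall a haΘ
      have ha0 : 0 ≤ a := ((hΘmem a).mp haΘ).1.1
      set tn := (a + π/2)/2 + π/2 with htn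
      obtain ⟨t, htΘ, hcos⟩ := hQ tn (by rw [htn]; linarith [Real.pi_pos])
        (by rw [htn]; linarith [Real.pi_pos])
      have htle : t ≤ a := le_csSup hΘbddA htΘ
      have ht0 : 0 ≤ t := ((hΘmem t).mp htΘ).1.1
      have hneg : Real.cos (tn - t) < 0 := by
        apply Real.cos_neg_of_pi_div_two_lt_of_lt
        · rw [htn]; linarith
        · rw [htn]; linarith [Real.pi_pos]
      rw [show t - tn = -(tn - t) by ring, Real.cos_neg] at hcos
      linarith
    -- done with hB case
  · -- all of Θ is above π/2
    exfalso
    have hforall : ∀ t ∈ Θ, π/2 < t := by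
      intro t ht
      by_contra hcon
      push_neg at hcon
      exact hA ⟨t, ht, ((hΘmem t).mp ht).1.1, hcon⟩
    set b := sInf Θ with hb
    have hbΘ : b ∈ Θ := hΘclosed.csInf_mem hΘne hΘbddB
    have hblt : π/2 < b := hforall b hbΘ
    have hbpi : b ≤ π := ((hΘmem b).mp hbΘ).1.2
    set tn := (b - π/2)/2 with htn
    obtain ⟨t, htΘ, hcos⟩ := hQ tn (by rw [htn]; linarith)
      (by rw [htn]; linarith [Real.pi_pos])
    have htge : b ≤ t := csInf_le hΘbddB htΘ
    have htpi : t ≤ π := ((hΘmem t).mp htΘ).1.2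
    have hneg : Real.cos (t - tn) < 0 := by
      apply Real.cos_neg_of_pi_div_two_lt_of_lt
      · rw [htn]; linarith
      · rw [htn]; linarith [Real.pi_pos]
    linarith

end chord

section final
open Bornology

theorem completion_exists (D : Set E2) (hDcomp : IsCompact D) (hDconv : Convex ℝ D)
    (hDint : (interior D).Nonempty) :
    0 < Metric.diam D ∧
    ∃ M : Set E2, IsCompact M ∧ Convex ℝ M ∧ D ⊆ M ∧
      M.Nonempty ∧
      (∀ x ∈ M, ∀ y ∈ M, dist x y ≤ Metric.diam D) ∧
      (∀ y : E2, (∀ x ∈ M, dist y x ≤ Metric.diam D) → y ∈ M) ∧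
      Metric.diam M = Metric.diam D := by
  set w := Metric.diam D with hwdef
  have hDne : D.Nonempty := hDint.mono interior_subset
  have hDbdd : IsBounded D := hDcomp.isBounded
  have hw0 : 0 < w := by
    obtain ⟨x, hx⟩ := hDint
    obtain ⟨r, hr, hball⟩ := Metric.isOpen_iff.mp isOpen_interior x hx
    set y := x + (r/2) • (EuclideanSpace.single (0 : Fin 2) (1:ℝ)) with hy
    have hdxy : dist x y = r/2 := by
      rw [hy, dist_eq_norm]
      have : x - (x + (r/2) • EuclideanSpace.single (0:Fin 2) (1:ℝ))
          = -((r/2) • EuclideanSpace.single (0:Fin 2) (1:ℝ)) := by abel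
      rw [this, norm_neg, norm_smul, Real.norm_eq_abs, abs_of_pos (by linarith),
        EuclideanSpace.norm_single]
      simp
    have hyD : y ∈ D := interior_subset (hball (by
      rw [Metric.mem_ball, dist_comm, hdxy]; linarith))
    have := Metric.dist_le_diam_of_mem hDbdd (interior_subset hx) hyD
    rw [hdxy] at this
    rw [hwdef]
    linarith
  set S : Set (Set E2) := {A | D ⊆ A ∧ ∀ x ∈ A, ∀ y ∈ A, dist x y ≤ w} with hS
  have hDS : D ∈ S := ⟨subset_rfl, fun x hx y hy => Metric.dist_le_diam_of_mem hDbdd hx hy⟩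
  obtain ⟨M, hDM, hMmax⟩ := zorn_subset_nonempty S (by
    intro c hcS hchain hcne
    refine ⟨⋃₀ c, ⟨?_, ?_⟩, fun s hs => subset_sUnion_of_mem hs⟩
    · obtain ⟨A, hA⟩ := hcne
      exact (hcS hA).1.trans (subset_sUnion_of_mem hA)
    · rintro x ⟨s, hs, hxs⟩ y ⟨t, ht, hyt⟩
      rcases hchain.total hs ht with h | h
      · exact (hcS ht).2 x (h hxs) y hyt
      · exact (hcS hs).2 x hxs y (h hyt)) D hDS
  have hpair : ∀ x ∈ M, ∀ y ∈ M, dist x y ≤ w := hMmax.1.2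
  have hmax : ∀ y : E2, (∀ x ∈ M, dist y x ≤ w) → y ∈ M := by
    intro y hy
    have hins : insert y M ∈ S := by
      refine ⟨hDM.trans (subset_insert y M), ?_⟩
      rintro x (rfl | hx) z (rfl | hz)
      · simp [hw0.le]
      · exact hy z hz
      · rw [dist_comm]; exact hy x hx
      · exact hpair x hx z hz
    exact hMmax.2 hins (subset_insert y M) (mem_insert y M)
  have hMne : M.Nonempty := hDne.mono hDM
  have hMbdd : IsBounded M := Metric.isBounded_iff.mpr ⟨w, fun x hx y hy => hpair x hx y hy⟩
  have hMdiamle : Metric.diam M ≤ w := Metric.diam_le_of_forall_dist_le hw0.le hpair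
  have hMclosed : IsClosed M := by
    apply isClosed_of_closure_subset
    have hcl : closure M ∈ S := by
      refine ⟨hDM.trans subset_closure, ?_⟩
      intro x hx y hy
      have h1 := Metric.dist_le_diam_of_mem hMbdd.closure hx hy
      rw [Metric.diam_closure] at h1
      linarith
    exact hMmax.2 hcl subset_closure
  have hMconv : Convex ℝ M := by
    have hch : convexHull ℝ M ∈ S := by
      refine ⟨hDM.trans (subset_convexHull ℝ M), ?_⟩
      intro x hx y hy
      have h1 := Metric.dist_le_diam_of_mem (isBounded_convexHull.mpr hMbdd) hx hy
      rw [convexHull_diam] at h1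
      linarith
    have hsub := hMmax.2 hch (subset_convexHull ℝ M)
    have heq : convexHull ℝ M = M := subset_antisymm hsub (subset_convexHull ℝ M)
    exact heq ▸ convex_convexHull ℝ M
  have hMcomp : IsCompact M := Metric.isCompact_of_isClosed_isBounded hMclosed hMbdd
  have hMdiam : Metric.diam M = w :=
    le_antisymm hMdiamle (hwdef ▸ Metric.diam_mono hDM hMbdd)
  exact ⟨hw0, M, hMcomp, hMconv, hDM, hMne, hpair, hmax, hMdiam⟩

end final

section thm

theorem constant_width_completion' (D : Set E2) (hDcomp : IsCompact D) (hDconv : Convex ℝ D)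
    (hDint : (interior D).Nonempty) :
    ∃ D' : Set E2, (IsCompact D' ∧ Convex ℝ D' ∧ (interior D').Nonempty) ∧ D ⊆ D' ∧
      (∀ d : E2, ‖d‖ = 1 →
        sSup ((fun x => (inner ℝ x d : ℝ)) '' D') - sInf ((fun x => (inner ℝ x d : ℝ)) '' D')
          = Metric.diam D) ∧
      Metric.diam D' = Metric.diam D := by
  obtain ⟨hw0, M, hMcomp, hMconv, hDM, hMne, hpair, hmax, hMdiam⟩ :=
    completion_exists D hDcomp hDconv hDint
  refine ⟨M, ⟨hMcomp, hMconv, hDint.mono (interior_mono hDM)⟩, hDM, ?_, hMdiam⟩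
  intro d hd
  obtain ⟨p, hp, hmaxp, hchord⟩ := chord_exists hw0 hMcomp hMne hpair hmax hd
  set w := Metric.diam D with hwdef
  set f := fun x : E2 => (inner ℝ x d : ℝ) with hf
  have hcont : Continuous f := continuous_id.inner continuous_const
  have himg_ne : (f '' M).Nonempty := hMne.image f
  have hbddA : BddAbove (f '' M) := (hMcomp.image hcont).bddAbove
  have hbddB : BddBelow (f '' M) := (hMcomp.image hcont).bddBelow
  have hS : sSup (f '' M) = f p := by
    apply le_antisymm
    · exact csSup_le himg_ne (by rintro _ ⟨y, hy, rfl⟩; exact hmaxp y hy)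
    · exact le_csSup hbddA ⟨p, hp, rfl⟩
  have hfq : f (p - w • d) = f p - w := by
    have hdd : (inner ℝ d d : ℝ) = 1 := by
      rw [real_inner_self_eq_norm_sq, hd]; norm_num
    simp only [hf, inner_sub_left, real_inner_smul_left, hdd, mul_one]
  have hIle : sInf (f '' M) ≤ f p - w := by
    rw [← hfq]; exact csInf_le hbddB ⟨_, hchord, rfl⟩
  have hIge : ∀ z ∈ f '' M, f p - w ≤ z := by
    rintro _ ⟨y, hy, rfl⟩
    have h1 : (inner ℝ (p - y) d : ℝ) ≤ ‖p - y‖ * ‖d‖ := real_inner_le_norm _ _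
    rw [hd, mul_one] at h1
    have h2 : ‖p - y‖ ≤ w := by rw [← dist_eq_norm]; exact hpair p hp y hy
    have h3 : (inner ℝ (p - y) d : ℝ) = f p - f y := by
      simp only [hf, inner_sub_left]
    simp only [hf] at *
    linarith
  have hI : sInf (f '' M) = f p - w := le_antisymm hIle (le_csInf himg_ne hIge)
  rw [hS, hI]
  ring

end thm

end AuxCW

theorem constant_width_completion (D : Set E2) (hD : IsConvexBody D) :
    ∃ D' : Set E2, IsConvexBody D' ∧ D ⊆ D' ∧
      ConstantWidth D' (Metric.diam D) ∧ Metric.diam D' = Metric.diam D := by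
  obtain ⟨h1, h2, h3⟩ := hD
  obtain ⟨D', hbody, hsub, hcw, hdiam⟩ := constant_width_completion' D h1 h2 h3
  exact ⟨D', ⟨hbody.1, hbody.2.1, hbody.2.2⟩, hsub, (fun d hd => hcw d hd), hdiam⟩

end
end

section
/- Let x₁x₂x₃ be a triangle, and let y₁, y₂ be points on the interior angle bisectors from x₁ and x₂ respectively. If |x₁y₁| = |x₂y₂| ≥ (1/2)·per(x₁x₂x₃), then |y₁y₂| > |x₁y₁|. -/
open Set

noncomputable section

/-- `y` lies on the interior angle bisector of the triangle `x₁x₂x₃` emanating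
from `x₁`: the ray from `x₁` in the direction of the sum of the unit vectors
towards `x₂` and `x₃`. -/
def OnBisector (x₁ x₂ x₃ y : E2) : Prop :=
  ∃ t : ℝ, 0 ≤ t ∧
    y = x₁ + t • (‖x₂ - x₁‖⁻¹ • (x₂ - x₁) + ‖x₃ - x₁‖⁻¹ • (x₃ - x₁))

private lemma eq_of_sq_eq' (a b : ℝ) (ha : 0 ≤ a) (hb : 0 ≤ b) (h : a^2 = b^2) : a = b := by
  rw [← Real.sqrt_sq ha, ← Real.sqrt_sq hb, h]

private lemma le_of_sq_le (x y : ℝ) (hx : 0 ≤ x) (hy : 0 ≤ y) (h : x^2 ≤ y^2) : x ≤ y := by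
  nlinarith

private lemma aux_Scpcq (c s S P : ℝ) (hc0 : 0 < c) (hcs : c < s) (hS0 : 0 < S)
    (hsS : s*S = c*P) : S ≤ P := by nlinarith

private lemma aux_F3 (c s S cp cq : ℝ) (hc0 : 0 < c) (hcs : c < s) (hS0 : 0 < S)
    (hcp0 : 0 ≤ cp) (hcq0 : 0 ≤ cq) (hcp1 : cp ≤ 1) (hcq1 : cq ≤ 1)
    (hsS : s*S = c*(cp*cq)) : c*(cp+cq) ≤ s*(1+2*S) := by
  have hScpcq : S ≤ cp*cq := aux_Scpcq c s S (cp*cq) hc0 hcs hS0 hsS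
  have h5 : S*(c*(cp+cq)) ≤ S*(s*(1+2*S)) := by
    nlinarith [mul_nonneg (mul_nonneg hS0.le (sub_nonneg.2 hcp1)) (sub_nonneg.2 hcq1),
      mul_nonneg hc0.le (sub_nonneg.2 hScpcq),
      mul_nonneg (mul_nonneg hS0.le hcp0) hcq0]
  exact le_of_mul_le_mul_left h5 hS0

private lemma aux_G (c s S cp cq L : ℝ) (hc0 : 0 < c) (hcs : c < s) (hS0 : 0 < S)
    (hcp0 : 0 ≤ cp) (hcq0 : 0 ≤ cq) (hcp1 : cp ≤ 1) (hcq1 : cq ≤ 1)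
    (hsS : s*S = c*(cp*cq)) (hLs : s ≤ L) :
    0 < c^2 - 2*c*L*(cp+cq) + L^2 + 2*(L^2*S) := by
  have hF3 := aux_F3 c s S cp cq hc0 hcs hS0 hcp0 hcq0 hcp1 hcq1 hsS
  have hdecomp : c^2 - 2*c*L*(cp+cq) + L^2 + 2*(L^2*S) =
      (c-s)^2 + 2*(c*s)*((1-cp)*(1-cq)) + (L-s)*((L+s)*(1+2*S) - 2*c*(cp+cq)) := by
    linear_combination (2*s)*hsS
  have hbr : 0 ≤ (L+s)*(1+2*S) - 2*c*(cp+cq) := by nlinarith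
  have hs0 : 0 < s := lt_trans hc0 hcs
  rw [hdecomp]
  have h6 : 0 < (c-s)^2 := by
    have hne : c - s ≠ 0 := sub_ne_zero.mpr (ne_of_lt hcs)
    exact lt_of_le_of_ne (sq_nonneg _) (Ne.symm (pow_ne_zero 2 hne))
  linarith [h6, mul_nonneg (sub_nonneg.2 hLs) hbr,
    mul_nonneg (mul_nonneg (mul_pos hc0 hs0).le (sub_nonneg.2 hcp1)) (sub_nonneg.2 hcq1)]

private lemma key_ineq (a b c s p q r t1 t2 : ℝ)
    (hp : 0 < p) (hq : 0 < q) (hr : 0 < r)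
    (ha : a = q + r) (hb : b = p + r) (hc : c = p + q) (hs : s = p + q + r)
    (ht1 : 0 ≤ t1) (ht2 : 0 ≤ t2)
    (h1 : p * a * t1^2 = q * b * t2^2)
    (h2 : s * (b * c) ≤ 4 * p * t1^2) :
    0 < 4*s*(a*p*t1^2 + 2*p*q*(t1*t2) - a*c*p*t1 - b*c*q*t2) + a*b*c^3 := by
  have ha0 : 0 < a := by rw [ha]; linarith
  have hb0 : 0 < b := by rw [hb]; linarith
  have hc0 : 0 < c := by rw [hc]; linarith
  have hs0 : 0 < s := by rw [hs]; linarith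
  have hcs : c < s := by rw [hc, hs]; linarith
  set cp := Real.sqrt (p*s/(b*c)) with hcp_def
  set cq := Real.sqrt (q*s/(a*c)) with hcq_def
  set S := Real.sqrt (p*q/(a*b)) with hS_def
  set L := 2*t1*cp with hL_def
  have hcp2 : cp^2 = p*s/(b*c) := Real.sq_sqrt (by positivity)
  have hcq2 : cq^2 = q*s/(a*c) := Real.sq_sqrt (by positivity)
  have hS2 : S^2 = p*q/(a*b) := Real.sq_sqrt (by positivity)
  have hcp0 : 0 ≤ cp := Real.sqrt_nonneg _
  have hcq0 : 0 ≤ cq := Real.sqrt_nonneg _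
  have hS0 : 0 < S := Real.sqrt_pos.mpr (by positivity)
  have hcp1 : cp ≤ 1 := Real.sqrt_le_one.mpr (by
    rw [div_le_one (by positivity)]; nlinarith)
  have hcq1 : cq ≤ 1 := Real.sqrt_le_one.mpr (by
    rw [div_le_one (by positivity)]; nlinarith)
  have hcp2' : (b*c) * cp^2 = p*s := by rw [hcp2]; field_simp
  have hcq2' : (a*c) * cq^2 = q*s := by rw [hcq2]; field_simp
  have hS2' : (a*b) * S^2 = p*q := by rw [hS2]; field_simp
  have hsS : s*S = c*(cp*cq) := by
    apply eq_of_sq_eq' _ _ (by positivity) (by positivity)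
    have h3 : (s*S)^2 * (a*b) = (c*(cp*cq))^2 * (a*b) := by
      have e1 : (s*S)^2 * (a*b) = s^2 * ((a*b)*S^2) := by ring
      have e2 : (c*(cp*cq))^2 * (a*b) = (c^2/(b*c)/(a*c)) * ((b*c)*cp^2) * ((a*c)*cq^2) * (a*b) := by
        field_simp
      rw [e1, e2, hS2', hcp2', hcq2']
      field_simp
    exact mul_right_cancel₀ (by positivity) h3
  have hat : a*(t1*S) = q*t2 := by
    apply eq_of_sq_eq' _ _ (by positivity) (by positivity)
    have h3 : (a*(t1*S))^2 * b = (q*t2)^2 * b := by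
      have e1 : (a*(t1*S))^2 * b = a*t1^2*((a*b)*S^2) := by ring
      rw [e1, hS2']
      linear_combination q*h1
    exact mul_right_cancel₀ (ne_of_gt hb0) h3
  have hL0 : 0 ≤ L := by positivity
  have hL2 : (b*c) * L^2 = 4*p*s*t1^2 := by
    rw [hL_def]; linear_combination (4*t1^2)*hcp2'
  have hLs : s ≤ L := by
    refine le_of_sq_le s L hs0.le hL0 ?_
    have h8 := mul_le_mul_of_nonneg_left h2 hs0.le
    have hbc : (0:ℝ) < b*c := by positivity
    rw [← mul_le_mul_iff_of_pos_right hbc]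
    calc s^2 * (b*c) = s*(s*(b*c)) := by ring
      _ ≤ s*(4*p*t1^2) := h8
      _ = (b*c)*L^2 := by rw [hL2]; ring
      _ = L^2*(b*c) := by ring
  have hid : a*b*c*(c^2 - 2*c*L*(cp+cq) + L^2 + 2*(L^2*S)) =
      4*s*(a*p*t1^2 + 2*p*q*(t1*t2) - a*c*p*t1 - b*c*q*t2) + a*b*c^3 := by
    rw [hL_def]
    linear_combination (4*a*t1^2 + 8*a*S*t1^2 - 4*a*c*t1) * hcp2' + (4*t1*a*b*c) * hsS + (8*p*s*t1 - 4*b*c*s) * hat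
  have hG := aux_G c s S cp cq L hc0 hcs hS0 hcp0 hcq0 hcp1 hcq1 hsS hLs
  calc (0:ℝ) < a*b*c*(c^2 - 2*c*L*(cp+cq) + L^2 + 2*(L^2*S)) := by positivity
    _ = _ := hid

private lemma key_final (a b c p q r s t1 t2 N1 N2 W1 W2 Z D2 : ℝ)
    (hp : 0 < p) (hq : 0 < q) (hr : 0 < r)
    (ha : a = q + r) (hb : b = p + r) (hc : c = p + q) (hs : s = p + q + r)
    (ht1 : 0 ≤ t1) (ht2 : 0 ≤ t2)
    (hN1 : (b*c)*N1 = 4*p*s)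
    (hN2 : (a*c)*N2 = 4*q*s)
    (hW1 : b*W1 = b*c + (b^2+c^2-a^2)/2)
    (hW2 : a*W2 = -(a*c) + (b^2-a^2-c^2)/2)
    (hZ : (a*b*c)*Z = -(a*b*c) + b*((b^2-a^2-c^2)/2) - a*((b^2+c^2-a^2)/2) + c*((a^2+b^2-c^2)/2))
    (hD2 : D2 = c^2 + t2^2*N2 + t1^2*N1 + 2*t2*W2 - 2*t1*W1 - 2*(t1*t2)*Z)
    (h1 : t1^2*N1 = t2^2*N2)
    (h2 : s^2 ≤ t1^2*N1) :
    t1^2*N1 < D2 := by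
  subst ha; subst hb; subst hc; subst hs
  set a := q + r with ha
  set b := p + r with hb
  set c := p + q with hc
  set s := p + q + r with hs
  have ha0 : 0 < a := by rw [ha]; linarith
  have hb0 : 0 < b := by rw [hb]; linarith
  have hc0 : 0 < c := by rw [hc]; linarith
  have hs0 : 0 < s := by rw [hs]; linarith
  -- h1' : p*a*t1^2 = q*b*t2^2
  have h1' : p*a*t1^2 = q*b*t2^2 := by
    have e : (4*c*s)*(p*a*t1^2) = (4*c*s)*(q*b*t2^2) := by
      linear_combination (-(a*c*t1^2))*hN1 + (b*c*t2^2)*hN2 + (a*b*c^2)*h1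
    exact mul_left_cancel₀ (by positivity) e
  -- h2' : s*(b*c) ≤ 4*p*t1^2
  have h2' : s*(b*c) ≤ 4*p*t1^2 := by
    have e := mul_le_mul_of_nonneg_right h2 (le_of_lt (mul_pos hb0 hc0))
    have e2 : t1^2*N1*(b*c) = (4*p*t1^2)*s := by linear_combination t1^2*hN1
    rw [e2] at e
    have e3 : s^2*(b*c) = (s*(b*c))*s := by ring
    rw [e3] at e
    exact le_of_mul_le_mul_right e hs0
  have hkey := key_ineq a b c s p q r t1 t2 hp hq hr ha hb hc hs ht1 ht2 h1' h2'
  have hidD : (a*b*c)*(D2 - t1^2*N1) =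
      4*s*(a*p*t1^2 + 2*p*q*(t1*t2) - a*c*p*t1 - b*c*q*t2) + a*b*c^3 := by
    rw [hD2]
    simp only [ha, hb, hc, hs] at *
    linear_combination (b*t2^2)*hN2 + (2*b*c*t2)*hW2 - (2*a*c*t1)*hW1 - (2*(t1*t2))*hZ - (4*s)*h1'
  have habc : (0:ℝ) < a*b*c := by positivity
  have hpos : 0 < (a*b*c)*(D2 - t1^2*N1) := by rw [hidD]; exact hkey
  rcases mul_pos_iff.mp hpos with ⟨-, h9⟩ | ⟨h9, -⟩
  · linarith
  · linarith

open RealInnerProductSpace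

private lemma inner_comb (u v w : E2) (α β : ℝ) :
    ⟪w, α•u + β•v⟫ = α*⟪w,u⟫ + β*⟪w,v⟫ := by
  simp only [inner_add_right, real_inner_smul_right]

private lemma inner_comb2 (u v u' v' : E2) (α β γ δ : ℝ) :
    ⟪α•u + β•v, γ•u' + δ•v'⟫ =
      α*γ*⟪u,u'⟫ + α*δ*⟪u,v'⟫ + β*γ*⟪v,u'⟫ + β*δ*⟪v,v'⟫ := by
  simp only [inner_add_left, inner_add_right, real_inner_smul_left, real_inner_smul_right]
  ring

private lemma norm_comb2 (u v : E2) (α β : ℝ) :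
    ‖α•u + β•v‖^2 = α^2*‖u‖^2 + 2*(α*β)*⟪u,v⟫ + β^2*‖v‖^2 := by
  rw [← real_inner_self_eq_norm_sq, inner_comb2]
  rw [real_inner_self_eq_norm_sq, real_inner_self_eq_norm_sq, real_inner_comm v u]
  ring

private lemma norm_comb (w d₁ d₂ : E2) (t1 t2 : ℝ) :
    ‖w + t2 • d₂ - t1 • d₁‖^2 =
      ‖w‖^2 + t2^2*‖d₂‖^2 + t1^2*‖d₁‖^2 + 2*t2*⟪w, d₂⟫ - 2*t1*⟪w, d₁⟫
        - 2*(t1*t2)*⟪d₁, d₂⟫ := by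
  rw [norm_sub_sq_real, norm_add_sq_real]
  rw [inner_add_left, real_inner_smul_left, real_inner_smul_right, real_inner_smul_right,
    real_inner_smul_right]
  rw [real_inner_comm d₂ d₁]
  have h1 : ‖t2 • d₂‖^2 = t2^2 * ‖d₂‖^2 := by
    rw [norm_smul, mul_pow, Real.norm_eq_abs, sq_abs]
  have h2 : ‖t1 • d₁‖^2 = t1^2 * ‖d₁‖^2 := by
    rw [norm_smul, mul_pow, Real.norm_eq_abs, sq_abs]
  rw [h1, h2]
  ring

set_option maxHeartbeats 800000 in
theorem balitskiy_lemma (x₁ x₂ x₃ y₁ y₂ : E2)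
    (hncol : ¬ Collinear ℝ ({x₁, x₂, x₃} : Set E2))
    (hy₁ : OnBisector x₁ x₂ x₃ y₁) (hy₂ : OnBisector x₂ x₁ x₃ y₂)
    (heq : dist x₁ y₁ = dist x₂ y₂)
    (hper : (1/2) * (dist x₁ x₂ + dist x₂ x₃ + dist x₃ x₁) ≤ dist x₁ y₁) :
    dist x₁ y₁ < dist y₁ y₂ := by
  obtain ⟨t1, ht1, hy1e⟩ := hy₁
  obtain ⟨t2, ht2, hy2e⟩ := hy₂
  obtain ⟨a, ha_def⟩ : ∃ x : ℝ, x = ‖x₃ - x₂‖ := ⟨_, rfl⟩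
  obtain ⟨b, hb_def⟩ : ∃ x : ℝ, x = ‖x₃ - x₁‖ := ⟨_, rfl⟩
  obtain ⟨c, hc_def⟩ : ∃ x : ℝ, x = ‖x₂ - x₁‖ := ⟨_, rfl⟩
  -- nondegeneracy
  have hne21 : x₂ ≠ x₁ := by
    intro h; apply hncol; rw [h]
    have : ({x₁, x₁, x₃} : Set E2) = {x₁, x₃} := by ext z; simp; try tauto
    rw [this]; exact collinear_pair ℝ x₁ x₃
  have hne31 : x₃ ≠ x₁ := by
    intro h; apply hncol; rw [h]
    have : ({x₁, x₂, x₁} : Set E2) = {x₁, x₂} := by ext z; simp; try tauto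
    rw [this]; exact collinear_pair ℝ x₁ x₂
  have hne32 : x₃ ≠ x₂ := by
    intro h; apply hncol; rw [h]
    have : ({x₁, x₂, x₂} : Set E2) = {x₁, x₂} := by ext z; simp; try tauto
    rw [this]; exact collinear_pair ℝ x₁ x₂
  have ha0 : 0 < a := by rw [ha_def]; exact norm_pos_iff.mpr (sub_ne_zero.mpr hne32)
  have hb0 : 0 < b := by rw [hb_def]; exact norm_pos_iff.mpr (sub_ne_zero.mpr hne31)
  have hc0 : 0 < c := by rw [hc_def]; exact norm_pos_iff.mpr (sub_ne_zero.mpr hne21)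
  -- distances
  have hdist_a : dist x₃ x₂ = a := by rw [dist_eq_norm, ha_def]
  have hdist_b : dist x₃ x₁ = b := by rw [dist_eq_norm, hb_def]
  have hdist_c : dist x₂ x₁ = c := by rw [dist_eq_norm, hc_def]
  -- strict triangle inequalities
  have htri1 : a < b + c := by
    have h := dist_triangle x₃ x₁ x₂
    rw [hdist_a, hdist_b, dist_comm x₁ x₂, hdist_c] at h
    rcases lt_or_eq_of_le h with h' | h'
    · exact h'
    · exfalso; apply hncol
      have hw : Wbtw ℝ x₃ x₁ x₂ := by
        apply dist_add_dist_eq_iff.mp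
        rw [hdist_b, dist_comm x₁ x₂, hdist_c, hdist_a]
        exact h'.symm
      have hcol := hw.collinear
      have hset : ({x₃, x₁, x₂} : Set E2) = {x₁, x₂, x₃} := by ext z; simp; try tauto
      rwa [hset] at hcol
  have htri2 : b < a + c := by
    have h := dist_triangle x₃ x₂ x₁
    rw [hdist_b, hdist_a, hdist_c] at h
    rcases lt_or_eq_of_le h with h' | h'
    · exact h'
    · exfalso; apply hncol
      have hw : Wbtw ℝ x₃ x₂ x₁ := by
        apply dist_add_dist_eq_iff.mp
        rw [hdist_b, hdist_a, hdist_c]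
        exact h'.symm
      have hcol := hw.collinear
      have hset : ({x₃, x₂, x₁} : Set E2) = {x₁, x₂, x₃} := by ext z; simp; try tauto
      rwa [hset] at hcol
  have htri3 : c < a + b := by
    have h := dist_triangle x₂ x₃ x₁
    rw [dist_comm x₂ x₃, hdist_a, hdist_b, hdist_c] at h
    rcases lt_or_eq_of_le h with h' | h'
    · exact h'
    · exfalso; apply hncol
      have hw : Wbtw ℝ x₂ x₃ x₁ := by
        apply dist_add_dist_eq_iff.mp
        rw [dist_comm x₂ x₃, hdist_a, hdist_b, hdist_c]
        exact h'.symm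
      have hcol := hw.collinear
      have hset : ({x₂, x₃, x₁} : Set E2) = {x₁, x₂, x₃} := by ext z; simp; try tauto
      rwa [hset] at hcol
  -- Ravi substitution
  obtain ⟨p, hp_def⟩ : ∃ x : ℝ, x = (b+c-a)/2 := ⟨_, rfl⟩
  obtain ⟨q, hq_def⟩ : ∃ x : ℝ, x = (a+c-b)/2 := ⟨_, rfl⟩
  obtain ⟨r, hr_def⟩ : ∃ x : ℝ, x = (a+b-c)/2 := ⟨_, rfl⟩
  obtain ⟨s, hs_def⟩ : ∃ x : ℝ, x = (a+b+c)/2 := ⟨_, rfl⟩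
  have hp : 0 < p := by rw [hp_def]; linarith
  have hq : 0 < q := by rw [hq_def]; linarith
  have hr : 0 < r := by rw [hr_def]; linarith
  have haqr : a = q + r := by rw [hq_def, hr_def]; ring
  have hbpr : b = p + r := by rw [hp_def, hr_def]; ring
  have hcpq : c = p + q := by rw [hp_def, hq_def]; ring
  have hspqr : s = p + q + r := by rw [hp_def, hq_def, hr_def, hs_def]; ring
  have hs0 : 0 < s := by rw [hspqr]; linarith
  -- inner products
  have hcc : ⟪x₂ - x₁, x₂ - x₁⟫ = c^2 := by rw [real_inner_self_eq_norm_sq, hc_def]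
  have hbb : ⟪x₃ - x₁, x₃ - x₁⟫ = b^2 := by rw [real_inner_self_eq_norm_sq, hb_def]
  have hsub : x₃ - x₂ = (x₃ - x₁) - (x₂ - x₁) := by abel
  have hA : ⟪x₂ - x₁, x₃ - x₁⟫ = (b^2 + c^2 - a^2)/2 := by
    have h := norm_sub_sq_real (x₃ - x₁) (x₂ - x₁)
    rw [← hsub, ← ha_def, ← hb_def, ← hc_def] at h
    rw [real_inner_comm]
    linarith
  have hB : ⟪x₂ - x₁, x₃ - x₂⟫ = (b^2 - a^2 - c^2)/2 := by
    rw [hsub, inner_sub_right, hA, hcc]; ring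
  have hC : ⟪x₃ - x₁, x₃ - x₂⟫ = (a^2 + b^2 - c^2)/2 := by
    rw [hsub, inner_sub_right, hbb, real_inner_comm, hA]; ring
  -- bisector directions
  have hc' : ‖x₁ - x₂‖ = c := by rw [norm_sub_rev, hc_def]
  rw [← hc_def, ← hb_def] at hy1e
  rw [hc', ← ha_def] at hy2e
  obtain ⟨d₁, hd1_def⟩ : ∃ v : E2, v = c⁻¹ • (x₂ - x₁) + b⁻¹ • (x₃ - x₁) := ⟨_, rfl⟩
  obtain ⟨d₂, hd2_def⟩ : ∃ v : E2, v = c⁻¹ • (x₁ - x₂) + a⁻¹ • (x₃ - x₂) := ⟨_, rfl⟩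
  rw [← hd1_def] at hy1e
  rw [← hd2_def] at hy2e
  have hd2alt : d₂ = (-(c⁻¹)) • (x₂ - x₁) + a⁻¹ • (x₃ - x₂) := by
    rw [hd2_def]
    congr 1
    have e : (x₁ - x₂) = -(x₂ - x₁) := by abel
    rw [e, smul_neg, ← neg_smul]
  -- norms / inner products with the directions
  have hN1' : (b*c)*‖d₁‖^2 = 4*p*s := by
    rw [hd1_def, norm_comb2, ← hc_def, ← hb_def, hA, hp_def, hs_def]
    field_simp [hb0.ne', hc0.ne']
    ring
  have hN2' : (a*c)*‖d₂‖^2 = 4*q*s := by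
    rw [hd2alt, norm_comb2, ← hc_def, ← ha_def, hB, hq_def, hs_def]
    field_simp [ha0.ne', hc0.ne']
    ring
  have hW1' : b*⟪x₂ - x₁, d₁⟫ = b*c + (b^2+c^2-a^2)/2 := by
    rw [hd1_def, inner_comb, hcc, hA]
    field_simp [hb0.ne', hc0.ne']
  have hW2' : a*⟪x₂ - x₁, d₂⟫ = -(a*c) + (b^2-a^2-c^2)/2 := by
    rw [hd2alt, inner_comb, hcc, hB]
    field_simp [ha0.ne', hc0.ne']
  have hZ' : (a*b*c)*⟪d₁, d₂⟫ = -(a*b*c) + b*((b^2-a^2-c^2)/2) - a*((b^2+c^2-a^2)/2)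
      + c*((a^2+b^2-c^2)/2) := by
    rw [hd1_def, hd2alt, inner_comb2, hcc, hB, real_inner_comm (x₂ - x₁) (x₃ - x₁), hA, hC]
    field_simp [ha0.ne', hb0.ne', hc0.ne']
    ring
  -- lengths
  have hl1 : dist x₁ y₁ = t1 * ‖d₁‖ := by
    rw [hy1e, dist_eq_norm]
    have e : x₁ - (x₁ + t1 • d₁) = -(t1 • d₁) := by abel
    rw [e, norm_neg, norm_smul, Real.norm_eq_abs, abs_of_nonneg ht1]
  have hl2 : dist x₂ y₂ = t2 * ‖d₂‖ := by
    rw [hy2e, dist_eq_norm]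
    have e : x₂ - (x₂ + t2 • d₂) = -(t2 • d₂) := by abel
    rw [e, norm_neg, norm_smul, Real.norm_eq_abs, abs_of_nonneg ht2]
  have hsq : t1^2*‖d₁‖^2 = t2^2*‖d₂‖^2 := by
    have h := heq
    rw [hl1, hl2] at h
    calc t1^2*‖d₁‖^2 = (t1*‖d₁‖)^2 := by ring
      _ = (t2*‖d₂‖)^2 := by rw [h]
      _ = t2^2*‖d₂‖^2 := by ring
  have h2sq : s^2 ≤ t1^2*‖d₁‖^2 := by
    have h := hper
    rw [dist_comm x₁ x₂, hdist_c, dist_comm x₂ x₃, hdist_a, hdist_b, hl1] at h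
    have hle : s ≤ t1 * ‖d₁‖ := by rw [hs_def]; linarith
    calc s^2 ≤ (t1*‖d₁‖)^2 := pow_le_pow_left₀ hs0.le hle 2
      _ = t1^2*‖d₁‖^2 := by ring
  have hD2v : (dist y₁ y₂)^2 = c^2 + t2^2*‖d₂‖^2 + t1^2*‖d₁‖^2 + 2*t2*⟪x₂ - x₁, d₂⟫
      - 2*t1*⟪x₂ - x₁, d₁⟫ - 2*(t1*t2)*⟪d₁, d₂⟫ := by
    rw [dist_eq_norm']
    have e : y₂ - y₁ = (x₂ - x₁) + t2 • d₂ - t1 • d₁ := by rw [hy1e, hy2e]; abel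
    rw [e, norm_comb, ← hc_def]
  have hmain := key_final a b c p q r s t1 t2 (‖d₁‖^2) (‖d₂‖^2) (⟪x₂ - x₁, d₁⟫)
    (⟪x₂ - x₁, d₂⟫) (⟪d₁, d₂⟫) ((dist y₁ y₂)^2) hp hq hr haqr hbpr hcpq hspqr
    ht1 ht2 hN1' hN2' hW1' hW2' hZ' hD2v hsq h2sq
  apply lt_of_pow_lt_pow_left₀ 2 dist_nonneg
  rw [hl1, mul_pow]
  exact hmain

end
end
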